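/- arXiv:2211.15297 — 7 statements merged into one kernel-verified Lean document; each statement's English description precedes it below -/
import Mathlib

section
/- Let r > 0 and let γ(t) = (x(t), y(t), z(t), 0) be a twice differentiable curve with −x² + y² + z² = −r², x > 0, spacelike velocity, and z(t) > 0 for all t. Consider the surface of revolution of elliptic type S_E(t,θ) = (x(t), y(t), z(t)cos θ, z(t)sin θ) with unit normal ξ = (1/(r‖γ̇‖))·(yż − ẏz, xż − ẋz, (ẋy − xẏ)cos θ, (ẋy − xẏ)sin θ). Then the mean curvature of S_E satisfies H = [z·(x(ÿż − ẏz̈) − y(ẍż − ẋz̈) + z(ẍẏ − ẋÿ)) + (xẏ − ẋy)‖γ̇‖²] / (2rz‖γ̇‖³) for all (t,θ). -/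
noncomputable section
open Real


/-- Minkowski inner product of `E₁⁴`. -/
def mink4 (X Y : ℝ × ℝ × ℝ × ℝ) : ℝ :=
  -(X.1 * Y.1) + X.2.1 * Y.2.1 + X.2.2.1 * Y.2.2.1 + X.2.2.2 * Y.2.2.2

/-- Partial derivative in the first (curve) parameter of a parametrized surface. -/
def pderivT (S : ℝ → ℝ → ℝ × ℝ × ℝ × ℝ) (t θ : ℝ) : ℝ × ℝ × ℝ × ℝ :=
  (deriv (fun s => (S s θ).1) t, deriv (fun s => (S s θ).2.1) t,
    deriv (fun s => (S s θ).2.2.1) t, deriv (fun s => (S s θ).2.2.2) t)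

/-- Partial derivative in the second (rotation) parameter of a parametrized surface. -/
def pderivTh (S : ℝ → ℝ → ℝ × ℝ × ℝ × ℝ) (t θ : ℝ) : ℝ × ℝ × ℝ × ℝ :=
  (deriv (fun p => (S t p).1) θ, deriv (fun p => (S t p).2.1) θ,
    deriv (fun p => (S t p).2.2.1) θ, deriv (fun p => (S t p).2.2.2) θ)

/-- Mean curvature of a parametrized surface `S` in `H³(r)` with respect to the unit
normal field `ξ`: `H = (g₂₂h₁₁ − 2g₁₂h₁₂ + g₁₁h₂₂)/(2(g₁₁g₂₂ − g₁₂²))`. -/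
def meanCurv (S ξ : ℝ → ℝ → ℝ × ℝ × ℝ × ℝ) (t θ : ℝ) : ℝ :=
  let g11 := mink4 (pderivT S t θ) (pderivT S t θ)
  let g12 := mink4 (pderivT S t θ) (pderivTh S t θ)
  let g22 := mink4 (pderivTh S t θ) (pderivTh S t θ)
  let h11 := mink4 (pderivT (fun a b => pderivT S a b) t θ) (ξ t θ)
  let h12 := mink4 (pderivTh (fun a b => pderivT S a b) t θ) (ξ t θ)
  let h22 := mink4 (pderivTh (fun a b => pderivTh S a b) t θ) (ξ t θ)
  (g22 * h11 - 2 * g12 * h12 + g11 * h22) / (2 * (g11 * g22 - g12 ^ 2))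

/-- Speed `‖γ̇‖ = √(−ẋ² + ẏ² + ż²)` of a curve `(x,y,z)`. -/
def speed3 (x y z : ℝ → ℝ) (t : ℝ) : ℝ :=
  Real.sqrt (-(deriv x t) ^ 2 + (deriv y t) ^ 2 + (deriv z t) ^ 2)

/-- Geodesic curvature of the curve `(x,y,z)` in `H²(r)`. -/
def kappaH2 (r : ℝ) (x y z : ℝ → ℝ) (t : ℝ) : ℝ :=
  -(x t * (deriv (deriv y) t * deriv z t - deriv y t * deriv (deriv z) t)
      - y t * (deriv (deriv x) t * deriv z t - deriv x t * deriv (deriv z) t)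
      + z t * (deriv (deriv x) t * deriv y t - deriv x t * deriv (deriv y) t))
    / (r * (speed3 x y z t) ^ 3)


lemma pd1 (x y z : ℝ → ℝ) (t θ : ℝ) :
    pderivT (fun t θ => ((x t, y t, z t * Real.cos θ, z t * Real.sin θ) : ℝ×ℝ×ℝ×ℝ)) t θ
    = (deriv x t, deriv y t, deriv z t * Real.cos θ, deriv z t * Real.sin θ) := by
  simp only [pderivT, deriv_mul_const_field]

lemma pd2 (x y z : ℝ → ℝ) (t θ : ℝ) :
    pderivTh (fun t θ => ((x t, y t, z t * Real.cos θ, z t * Real.sin θ) : ℝ×ℝ×ℝ×ℝ)) t θ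
    = (0, 0, z t * -Real.sin θ, z t * Real.cos θ) := by
  simp only [pderivTh, deriv_const, deriv_const_mul_field, Real.deriv_cos, Real.deriv_sin]

lemma pd3 (x y z : ℝ → ℝ) (t θ : ℝ) :
    pderivT (fun a b => pderivT (fun t θ => ((x t, y t, z t * Real.cos θ, z t * Real.sin θ) : ℝ×ℝ×ℝ×ℝ)) a b) t θ
    = (deriv (deriv x) t, deriv (deriv y) t, deriv (deriv z) t * Real.cos θ, deriv (deriv z) t * Real.sin θ) := by
  simp only [pderivT, deriv_mul_const_field]

lemma pd4 (x y z : ℝ → ℝ) (t θ : ℝ) :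
    pderivTh (fun a b => pderivT (fun t θ => ((x t, y t, z t * Real.cos θ, z t * Real.sin θ) : ℝ×ℝ×ℝ×ℝ)) a b) t θ
    = (0, 0, deriv z t * -Real.sin θ, deriv z t * Real.cos θ) := by
  simp only [pderivTh, pderivT, deriv_mul_const_field, deriv_const, deriv_const_mul_field,
    Real.deriv_cos, Real.deriv_sin]

lemma pd5 (x y z : ℝ → ℝ) (t θ : ℝ) :
    pderivTh (fun a b => pderivTh (fun t θ => ((x t, y t, z t * Real.cos θ, z t * Real.sin θ) : ℝ×ℝ×ℝ×ℝ)) a b) t θ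
    = (0, 0, z t * -Real.cos θ, z t * -Real.sin θ) := by
  simp only [pderivTh, deriv_const, deriv_const_mul_field, Real.deriv_cos, Real.deriv_sin,
    deriv_const', deriv.neg', deriv.fun_neg, mul_neg, neg_neg]

/-- mean curvature of the surface of revolution of elliptic type. -/
theorem meanCurvature_elliptic (r : ℝ) (hr : 0 < r) (x y z : ℝ → ℝ)
    (hx : Differentiable ℝ x) (hx2 : Differentiable ℝ (deriv x))
    (hy : Differentiable ℝ y) (hy2 : Differentiable ℝ (deriv y))
    (hz : Differentiable ℝ z) (hz2 : Differentiable ℝ (deriv z))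
    (hH2 : ∀ t : ℝ, -(x t) ^ 2 + (y t) ^ 2 + (z t) ^ 2 = -r ^ 2)
    (hx0 : ∀ t : ℝ, 0 < x t)
    (hsp : ∀ t : ℝ, 0 < -(deriv x t) ^ 2 + (deriv y t) ^ 2 + (deriv z t) ^ 2)
    (hz0 : ∀ t : ℝ, 0 < z t) :
    ∀ t θ : ℝ,
      meanCurv (fun t θ => ((x t, y t, z t * Real.cos θ, z t * Real.sin θ) : ℝ × ℝ × ℝ × ℝ))
        (fun t θ =>
          ((r * speed3 x y z t)⁻¹ •
            ((y t * deriv z t - deriv y t * z t,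
              x t * deriv z t - deriv x t * z t,
              (deriv x t * y t - x t * deriv y t) * Real.cos θ,
              (deriv x t * y t - x t * deriv y t) * Real.sin θ) : ℝ × ℝ × ℝ × ℝ))) t θ
      = (z t * (x t * (deriv (deriv y) t * deriv z t - deriv y t * deriv (deriv z) t)
            - y t * (deriv (deriv x) t * deriv z t - deriv x t * deriv (deriv z) t)
            + z t * (deriv (deriv x) t * deriv y t - deriv x t * deriv (deriv y) t))
          + (x t * deriv y t - deriv x t * y t) * (speed3 x y z t) ^ 2)
        / (2 * r * z t * (speed3 x y z t) ^ 3) := by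
  intro t θ
  have hpy : Real.cos θ ^ 2 + Real.sin θ ^ 2 = 1 := Real.cos_sq_add_sin_sq θ
  have hw := hsp t
  have hs : 0 < speed3 x y z t := Real.sqrt_pos.mpr hw
  have hs2 : speed3 x y z t ^ 2 = -(deriv x t) ^ 2 + (deriv y t) ^ 2 + (deriv z t) ^ 2 :=
    Real.sq_sqrt hw.le
  have hz := hz0 t
  have hz := hz0 t
  set S : ℝ → ℝ → ℝ × ℝ × ℝ × ℝ :=
    fun t θ => ((x t, y t, z t * Real.cos θ, z t * Real.sin θ) : ℝ × ℝ × ℝ × ℝ) with hSdef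
  set Xi : ℝ × ℝ × ℝ × ℝ :=
    (r * speed3 x y z t)⁻¹ •
      ((y t * deriv z t - deriv y t * z t,
        x t * deriv z t - deriv x t * z t,
        (deriv x t * y t - x t * deriv y t) * Real.cos θ,
        (deriv x t * y t - x t * deriv y t) * Real.sin θ) : ℝ × ℝ × ℝ × ℝ) with hXidef
  have hg11 : mink4 (pderivT S t θ) (pderivT S t θ) = speed3 x y z t ^ 2 := by
    rw [hSdef, pd1, hs2]; simp only [mink4]
    linear_combination (deriv z t) ^ 2 * hpy
  have hg12 : mink4 (pderivT S t θ) (pderivTh S t θ) = 0 := by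
    rw [hSdef, pd1, pd2]; simp only [mink4]; ring
  have hg22 : mink4 (pderivTh S t θ) (pderivTh S t θ) = z t ^ 2 := by
    rw [hSdef, pd2]; simp only [mink4]
    linear_combination (z t) ^ 2 * hpy
  have hh11 : mink4 (pderivT (fun a b => pderivT S a b) t θ) Xi
      = (r * speed3 x y z t)⁻¹ *
        (-(deriv (deriv x) t) * (y t * deriv z t - deriv y t * z t)
          + deriv (deriv y) t * (x t * deriv z t - deriv x t * z t)
          + deriv (deriv z) t * (deriv x t * y t - x t * deriv y t)) := by
    rw [hSdef, pd3, hXidef]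
    simp only [mink4, Prod.smul_mk, smul_eq_mul]
    linear_combination ((r * speed3 x y z t)⁻¹ * deriv (deriv z) t *
      (deriv x t * y t - x t * deriv y t)) * hpy
  have hh12 : mink4 (pderivTh (fun a b => pderivT S a b) t θ) Xi = 0 := by
    rw [hSdef, pd4, hXidef]
    simp only [mink4, Prod.smul_mk, smul_eq_mul]; ring
  have hh22 : mink4 (pderivTh (fun a b => pderivTh S a b) t θ) Xi
      = (r * speed3 x y z t)⁻¹ *
        (-(z t) * (deriv x t * y t - x t * deriv y t)) := by
    rw [hSdef, pd5, hXidef]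
    simp only [mink4, Prod.smul_mk, smul_eq_mul]
    linear_combination (-(z t) * (r * speed3 x y z t)⁻¹ *
      (deriv x t * y t - x t * deriv y t)) * hpy
  show (mink4 (pderivTh S t θ) (pderivTh S t θ) *
        mink4 (pderivT (fun a b => pderivT S a b) t θ) Xi
      - 2 * mink4 (pderivT S t θ) (pderivTh S t θ) *
        mink4 (pderivTh (fun a b => pderivT S a b) t θ) Xi
      + mink4 (pderivT S t θ) (pderivT S t θ) *
        mink4 (pderivTh (fun a b => pderivTh S a b) t θ) Xi) /
      (2 * (mink4 (pderivT S t θ) (pderivT S t θ) *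
        mink4 (pderivTh S t θ) (pderivTh S t θ)
        - mink4 (pderivT S t θ) (pderivTh S t θ) ^ 2)) = _
  rw [hg11, hg12, hg22, hh11, hh12, hh22]
  have hz' : z t ≠ 0 := ne_of_gt hz
  have hs' : speed3 x y z t ≠ 0 := ne_of_gt hs
  have hr' : r ≠ 0 := ne_of_gt hr
  field_simp
  ring
end
end

section
/- Let r > 0 and let γ(t) = (x(t), y(t), z(t), 0) be a twice differentiable curve with −x² + y² + z² = −r², x > 0, and spacelike velocity. Consider the surface of revolution of hyperbolic type S_H(t,θ) = (x(t)cosh θ, y(t), z(t), x(t)sinh θ) with unit normal ξ = (1/(r‖γ̇‖))·((yż − ẏz)cosh θ, xż − ẋz, ẋy − xẏ, (yż − ẏz)sinh θ). Then the mean curvature of S_H satisfies H = [x·(x(ÿż − ẏz̈) − y(ẍż − ẋz̈) + z(ẍẏ − ẋÿ)) − (yż − ẏz)‖γ̇‖²] / (2rx‖γ̇‖³) for all (t,θ). -/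
noncomputable section
open Real

/-- Auxiliary algebraic identity used in `meanCurvature_hyperbolic`. -/
lemma alg_hyp (r a a' a'' b b' b'' d d' d'' c s w : ℝ) (hr : r ≠ 0) (ha : a ≠ 0)
    (hw : w ≠ 0) (hcs : c ^ 2 = s ^ 2 + 1) (hw2 : w ^ 2 = -a' ^ 2 + b' ^ 2 + d' ^ 2) :
    ((-((a*s)*(a*s)) + (a*c)*(a*c)) *
        (-((a''*c)*((r*w)⁻¹*((b*d' - b'*d)*c))) + b''*((r*w)⁻¹*(a*d' - a'*d))
          + d''*((r*w)⁻¹*(a'*b - a*b')) + (a''*s)*((r*w)⁻¹*((b*d' - b'*d)*s)))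
      - 2 * (-((a'*c)*(a*s)) + (a'*s)*(a*c)) *
        (-((a'*s)*((r*w)⁻¹*((b*d' - b'*d)*c))) + (a'*c)*((r*w)⁻¹*((b*d' - b'*d)*s)))
      + (-((a'*c)*(a'*c)) + b'*b' + d'*d' + (a'*s)*(a'*s)) *
        (-((a*c)*((r*w)⁻¹*((b*d' - b'*d)*c))) + (a*s)*((r*w)⁻¹*((b*d' - b'*d)*s))))
    / (2 * ((-((a'*c)*(a'*c)) + b'*b' + d'*d' + (a'*s)*(a'*s)) * (-((a*s)*(a*s)) + (a*c)*(a*c))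
        - (-((a'*c)*(a*s)) + (a'*s)*(a*c)) ^ 2))
    = (a*(a*(b''*d' - b'*d'') - b*(a''*d' - a'*d'') + d*(a''*b' - a'*b''))
        - (b*d' - b'*d)*w^2) / (2*r*a*w^3) := by
  have hrw : r * w ≠ 0 := mul_ne_zero hr hw
  have e11 : -((a'*c)*(a'*c)) + b'*b' + d'*d' + (a'*s)*(a'*s) = w ^ 2 := by
    linear_combination (-a'^2) * hcs - hw2
  have e12 : -((a'*c)*(a*s)) + (a'*s)*(a*c) = 0 := by ring
  have e22 : -((a*s)*(a*s)) + (a*c)*(a*c) = a ^ 2 := by linear_combination a^2 * hcs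
  have f11 : -((a''*c)*((r*w)⁻¹*((b*d' - b'*d)*c))) + b''*((r*w)⁻¹*(a*d' - a'*d))
      + d''*((r*w)⁻¹*(a'*b - a*b')) + (a''*s)*((r*w)⁻¹*((b*d' - b'*d)*s))
      = (r*w)⁻¹ * (-(a''*(b*d' - b'*d)) + b''*(a*d' - a'*d) + d''*(a'*b - a*b')) := by
    linear_combination (-(r*w)⁻¹*(b*d' - b'*d)*a'') * hcs
  have f12 : -((a'*s)*((r*w)⁻¹*((b*d' - b'*d)*c))) + (a'*c)*((r*w)⁻¹*((b*d' - b'*d)*s)) = 0 := by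
    ring
  have f22 : -((a*c)*((r*w)⁻¹*((b*d' - b'*d)*c))) + (a*s)*((r*w)⁻¹*((b*d' - b'*d)*s))
      = -((r*w)⁻¹ * (a*(b*d' - b'*d))) := by
    linear_combination (-(r*w)⁻¹*a*(b*d' - b'*d)) * hcs
  rw [e11, e12, e22, f11, f12, f22]
  field_simp
  ring

/-- mean curvature of the surface of revolution of hyperbolic type. -/
theorem meanCurvature_hyperbolic (r : ℝ) (hr : 0 < r) (x y z : ℝ → ℝ)
    (hx : Differentiable ℝ x) (hx2 : Differentiable ℝ (deriv x))
    (hy : Differentiable ℝ y) (hy2 : Differentiable ℝ (deriv y))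
    (hz : Differentiable ℝ z) (hz2 : Differentiable ℝ (deriv z))
    (hH2 : ∀ t : ℝ, -(x t) ^ 2 + (y t) ^ 2 + (z t) ^ 2 = -r ^ 2)
    (hx0 : ∀ t : ℝ, 0 < x t)
    (hsp : ∀ t : ℝ, 0 < -(deriv x t) ^ 2 + (deriv y t) ^ 2 + (deriv z t) ^ 2) :
    ∀ t θ : ℝ,
      meanCurv (fun t θ => ((x t * Real.cosh θ, y t, z t, x t * Real.sinh θ) : ℝ × ℝ × ℝ × ℝ))
        (fun t θ =>
          ((r * speed3 x y z t)⁻¹ •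
            (((y t * deriv z t - deriv y t * z t) * Real.cosh θ,
              x t * deriv z t - deriv x t * z t,
              deriv x t * y t - x t * deriv y t,
              (y t * deriv z t - deriv y t * z t) * Real.sinh θ) : ℝ × ℝ × ℝ × ℝ))) t θ
      = (x t * (x t * (deriv (deriv y) t * deriv z t - deriv y t * deriv (deriv z) t)
            - y t * (deriv (deriv x) t * deriv z t - deriv x t * deriv (deriv z) t)
            + z t * (deriv (deriv x) t * deriv y t - deriv x t * deriv (deriv y) t))
          - (y t * deriv z t - deriv y t * z t) * (speed3 x y z t) ^ 2)
        / (2 * r * x t * (speed3 x y z t) ^ 3) := by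
  intro t θ
  have hQ := hsp t
  have hw2 : speed3 x y z t ^ 2 = -(deriv x t) ^ 2 + (deriv y t) ^ 2 + (deriv z t) ^ 2 :=
    Real.sq_sqrt hQ.le
  have hwpos : 0 < speed3 x y z t := Real.sqrt_pos.mpr hQ
  simp only [meanCurv, mink4, pderivT, pderivTh, deriv_mul_const_field,
    deriv_const_mul_field, Real.deriv_cosh, Real.deriv_sinh, deriv_const, deriv_const',
    Prod.smul_mk, smul_eq_mul]
  linear_combination alg_hyp r (x t) (deriv x t) (deriv (deriv x) t) (y t) (deriv y t)
    (deriv (deriv y) t) (z t) (deriv z t) (deriv (deriv z) t) (Real.cosh θ) (Real.sinh θ)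
    (speed3 x y z t) hr.ne' (hx0 t).ne' hwpos.ne' (Real.cosh_sq θ) hw2
end
end

section
/- Let r > 0 and let γ(t) = (x(t), y(t), z(t)) be a twice differentiable curve in H²(r) with spacelike velocity and z(t) > 0 for all t. Embed γ in H³(r) as (x, y, z, 0) and let S_E(t,θ) = (x, y, z cos θ, z sin θ) be the surface of revolution of elliptic type it generates, with unit normal ξ = (1/(r‖γ̇‖))·(yż − ẏz, xż − ẋz, (ẋy − xẏ)cos θ, (ẋy − xẏ)sin θ). Then S_E has vanishing mean curvature H ≡ 0 if and only if the geodesic curvature κ of γ in H²(r) satisfies κ(t) = (x ẏ − ẋ y) / (r z ‖γ̇‖) for all t. -/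
noncomputable section
open Real

lemma mc_formula (r : ℝ) (hr : r ≠ 0) (x y z : ℝ → ℝ) (t θ : ℝ)
    (hw : 0 < -(deriv x t) ^ 2 + (deriv y t) ^ 2 + (deriv z t) ^ 2) (hz0 : 0 < z t) :
    meanCurv (fun t θ => ((x t, y t, z t * Real.cos θ, z t * Real.sin θ) : ℝ × ℝ × ℝ × ℝ))
      (fun t θ =>
        ((r * speed3 x y z t)⁻¹ •
          ((y t * deriv z t - deriv y t * z t,
            x t * deriv z t - deriv x t * z t,
            (deriv x t * y t - x t * deriv y t) * Real.cos θ,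
            (deriv x t * y t - x t * deriv y t) * Real.sin θ) : ℝ × ℝ × ℝ × ℝ))) t θ
    = (z t * (-(deriv (deriv x) t) * (y t * deriv z t - deriv y t * z t)
          + deriv (deriv y) t * (x t * deriv z t - deriv x t * z t)
          + deriv (deriv z) t * (deriv x t * y t - x t * deriv y t))
        - (speed3 x y z t) ^ 2 * (deriv x t * y t - x t * deriv y t))
      / (2 * r * (speed3 x y z t) ^ 3 * z t) := by
  have hw0 : 0 < speed3 x y z t := Real.sqrt_pos.mpr hw
  have hw2 : (speed3 x y z t) ^ 2 = -(deriv x t) ^ 2 + (deriv y t) ^ 2 + (deriv z t) ^ 2 :=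
    Real.sq_sqrt hw.le
  have hs : Real.sin θ ^ 2 + Real.cos θ ^ 2 = 1 := Real.sin_sq_add_cos_sq θ
  have hT : pderivT (fun t θ => ((x t, y t, z t * Real.cos θ, z t * Real.sin θ) : ℝ × ℝ × ℝ × ℝ)) t θ
      = (deriv x t, deriv y t, deriv z t * Real.cos θ, deriv z t * Real.sin θ) := by
    simp only [pderivT, deriv_mul_const_field]
  have hTh : pderivTh (fun t θ => ((x t, y t, z t * Real.cos θ, z t * Real.sin θ) : ℝ × ℝ × ℝ × ℝ)) t θ
      = (0, 0, z t * -Real.sin θ, z t * Real.cos θ) := by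
    simp only [pderivTh, deriv_const_mul_field, deriv_const, Real.deriv_cos, Real.deriv_sin,
      mul_neg]
  have hTT : pderivT (fun a b => pderivT (fun t θ => ((x t, y t, z t * Real.cos θ, z t * Real.sin θ) : ℝ × ℝ × ℝ × ℝ)) a b) t θ
      = (deriv (deriv x) t, deriv (deriv y) t, deriv (deriv z) t * Real.cos θ,
          deriv (deriv z) t * Real.sin θ) := by
    simp only [pderivT, deriv_mul_const_field', deriv_mul_const_field]
  have hTTh : pderivTh (fun a b => pderivT (fun t θ => ((x t, y t, z t * Real.cos θ, z t * Real.sin θ) : ℝ × ℝ × ℝ × ℝ)) a b) t θ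
      = (0, 0, deriv z t * -Real.sin θ, deriv z t * Real.cos θ) := by
    simp only [pderivTh, pderivT, deriv_mul_const_field, deriv_const_mul_field, deriv_const,
      deriv_const', Real.deriv_cos, Real.deriv_sin, mul_neg]
  have hThTh : pderivTh (fun a b => pderivTh (fun t θ => ((x t, y t, z t * Real.cos θ, z t * Real.sin θ) : ℝ × ℝ × ℝ × ℝ)) a b) t θ
      = (0, 0, z t * -Real.cos θ, z t * -Real.sin θ) := by
    simp only [pderivTh, deriv_const_mul_field', deriv_const_mul_field, deriv_const,
      deriv_const', Real.deriv_cos, Real.deriv_sin, Real.deriv_cos', deriv.neg', mul_neg,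
      deriv.fun_neg]
  set w := speed3 x y z t with hwdef
  set c := Real.cos θ
  set s := Real.sin θ
  set X := deriv x t; set Y := deriv y t; set Z := deriv z t
  set X2 := deriv (deriv x) t; set Y2 := deriv (deriv y) t; set Z2 := deriv (deriv z) t
  set k : ℝ := (r * w)⁻¹ with hk
  set N : ℝ := -X2 * (y t * Z - Y * z t) + Y2 * (x t * Z - X * z t) + Z2 * (X * y t - x t * Y)
    with hN
  set D : ℝ := X * y t - x t * Y with hD
  rw [meanCurv]
  rw [hT, hTh, hTT, hTTh, hThTh]
  have Hg11 : mink4 (X, Y, Z * c, Z * s) (X, Y, Z * c, Z * s) = w ^ 2 := by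
    simp only [mink4]; linear_combination Z ^ 2 * hs - hw2
  have Hg12 : mink4 (X, Y, Z * c, Z * s) (0, 0, z t * -s, z t * c) = 0 := by
    simp only [mink4]; ring
  have Hg22 : mink4 ((0 : ℝ), (0 : ℝ), z t * -s, z t * c) (0, 0, z t * -s, z t * c)
      = z t ^ 2 := by
    simp only [mink4]; linear_combination z t ^ 2 * hs
  have Hh11 : mink4 (X2, Y2, Z2 * c, Z2 * s)
      (k • ((y t * Z - Y * z t, x t * Z - X * z t, D * c, D * s) : ℝ × ℝ × ℝ × ℝ))
      = k * N := by
    simp only [mink4, Prod.smul_mk, smul_eq_mul, hN]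
    linear_combination k * Z2 * D * hs
  have Hh12 : mink4 ((0 : ℝ), (0 : ℝ), Z * -s, Z * c)
      (k • ((y t * Z - Y * z t, x t * Z - X * z t, D * c, D * s) : ℝ × ℝ × ℝ × ℝ)) = 0 := by
    simp only [mink4, Prod.smul_mk, smul_eq_mul]; ring
  have Hh22 : mink4 ((0 : ℝ), (0 : ℝ), z t * -c, z t * -s)
      (k • ((y t * Z - Y * z t, x t * Z - X * z t, D * c, D * s) : ℝ × ℝ × ℝ × ℝ))
      = -(k * z t * D) := by
    simp only [mink4, Prod.smul_mk, smul_eq_mul]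
    linear_combination (-(k * z t * D)) * hs
  rw [Hg11, Hg12, Hg22, Hh11, Hh12, Hh22]
  have hrw0 : r * w ≠ 0 := mul_ne_zero hr hw0.ne'
  rw [hk]
  field_simp
  ring
/-- the surface of revolution of elliptic type is minimal iff the
generating curve satisfies the prescribed curvature equation. -/
theorem minimal_elliptic_iff (r : ℝ) (hr : 0 < r) (x y z : ℝ → ℝ)
    (hx : Differentiable ℝ x) (hx2 : Differentiable ℝ (deriv x))
    (hy : Differentiable ℝ y) (hy2 : Differentiable ℝ (deriv y))
    (hz : Differentiable ℝ z) (hz2 : Differentiable ℝ (deriv z))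
    (hH2 : ∀ t : ℝ, -(x t) ^ 2 + (y t) ^ 2 + (z t) ^ 2 = -r ^ 2)
    (hx0 : ∀ t : ℝ, 0 < x t)
    (hsp : ∀ t : ℝ, 0 < -(deriv x t) ^ 2 + (deriv y t) ^ 2 + (deriv z t) ^ 2)
    (hz0 : ∀ t : ℝ, 0 < z t) :
    (∀ t θ : ℝ,
      meanCurv (fun t θ => ((x t, y t, z t * Real.cos θ, z t * Real.sin θ) : ℝ × ℝ × ℝ × ℝ))
        (fun t θ =>
          ((r * speed3 x y z t)⁻¹ •
            ((y t * deriv z t - deriv y t * z t,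
              x t * deriv z t - deriv x t * z t,
              (deriv x t * y t - x t * deriv y t) * Real.cos θ,
              (deriv x t * y t - x t * deriv y t) * Real.sin θ) : ℝ × ℝ × ℝ × ℝ))) t θ = 0) ↔
      ∀ t : ℝ,
        kappaH2 r x y z t
          = (x t * deriv y t - deriv x t * y t) / (r * z t * speed3 x y z t) := by
  have hwpos : ∀ t, 0 < speed3 x y z t := fun t => Real.sqrt_pos.mpr (hsp t)
  have hw2 : ∀ t, (speed3 x y z t) ^ 2 = -(deriv x t) ^ 2 + (deriv y t) ^ 2 + (deriv z t) ^ 2 :=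
    fun t => Real.sq_sqrt (hsp t).le
  constructor
  · intro h t
    have h0 := h t 0
    rw [mc_formula r hr.ne' x y z t 0 (hsp t) (hz0 t)] at h0
    have hden : 2 * r * (speed3 x y z t) ^ 3 * z t ≠ 0 := by
      have := hwpos t; have := hz0 t; positivity
    have hnum := (div_eq_zero_iff.mp h0).resolve_right hden
    rw [kappaH2]
    rw [div_eq_div_iff (by have := hwpos t; positivity) (by have := hwpos t; have := hz0 t; positivity)]
    linear_combination (-(r * speed3 x y z t)) * hnum
  · intro h t θ
    rw [mc_formula r hr.ne' x y z t θ (hsp t) (hz0 t)]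
    apply div_eq_zero_iff.mpr
    left
    have ht := h t
    rw [kappaH2, div_eq_div_iff (by have := hwpos t; positivity) (by have := hwpos t; have := hz0 t; positivity)] at ht
    have h2 : (r * speed3 x y z t) *
        (z t * (-(deriv (deriv x) t) * (y t * deriv z t - deriv y t * z t)
            + deriv (deriv y) t * (x t * deriv z t - deriv x t * z t)
            + deriv (deriv z) t * (deriv x t * y t - x t * deriv y t))
          - (speed3 x y z t) ^ 2 * (deriv x t * y t - x t * deriv y t)) = 0 := by
      linear_combination -ht
    exact (mul_eq_zero.mp h2).resolve_left (mul_ne_zero hr.ne' (hwpos t).ne')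
end
end

section
/- Let r > 0 and let γ(t) = (x(t), y(t), z(t)) be a twice differentiable curve in H²(r) with spacelike velocity. Embed γ in H³(r) as (x, y, z, 0) and let S_H(t,θ) = (x cosh θ, y, z, x sinh θ) be the surface of revolution of hyperbolic type it generates, with unit normal ξ = (1/(r‖γ̇‖))·((yż − ẏz)cosh θ, xż − ẋz, ẋy − xẏ, (yż − ẏz)sinh θ). Then S_H has vanishing mean curvature H ≡ 0 if and only if the geodesic curvature κ of γ in H²(r) satisfies κ(t) = −(y ż − ẏ z) / (r x ‖γ̇‖) for all t. -/
noncomputable section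
open Real

lemma mc_eq (r : ℝ) (hr : 0 < r) (x y z : ℝ → ℝ)
    (hx : Differentiable ℝ x) (hx2 : Differentiable ℝ (deriv x))
    (hy : Differentiable ℝ y) (hy2 : Differentiable ℝ (deriv y))
    (hz : Differentiable ℝ z) (hz2 : Differentiable ℝ (deriv z))
    (hx0 : ∀ t : ℝ, 0 < x t)
    (hsp : ∀ t : ℝ, 0 < -(deriv x t) ^ 2 + (deriv y t) ^ 2 + (deriv z t) ^ 2)
    (t θ : ℝ) :
    meanCurv (fun t θ => ((x t * Real.cosh θ, y t, z t, x t * Real.sinh θ) : ℝ × ℝ × ℝ × ℝ))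
        (fun t θ =>
          ((r * speed3 x y z t)⁻¹ •
            (((y t * deriv z t - deriv y t * z t) * Real.cosh θ,
              x t * deriv z t - deriv x t * z t,
              deriv x t * y t - x t * deriv y t,
              (y t * deriv z t - deriv y t * z t) * Real.sinh θ) : ℝ × ℝ × ℝ × ℝ))) t θ
    = (x t * (x t * (deriv (deriv y) t * deriv z t - deriv y t * deriv (deriv z) t)
        - y t * (deriv (deriv x) t * deriv z t - deriv x t * deriv (deriv z) t)
        + z t * (deriv (deriv x) t * deriv y t - deriv x t * deriv (deriv y) t))
       - (speed3 x y z t) ^ 2 * (y t * deriv z t - deriv y t * z t))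
      / (2 * r * (speed3 x y z t) ^ 3 * x t) := by
  have wpos : 0 < speed3 x y z t := Real.sqrt_pos.mpr (hsp t)
  have hw : speed3 x y z t ^ 2 = -(deriv x t) ^ 2 + (deriv y t) ^ 2 + (deriv z t) ^ 2 :=
    Real.sq_sqrt (hsp t).le
  have hcs : Real.cosh θ ^ 2 - Real.sinh θ ^ 2 = 1 := Real.cosh_sq_sub_sinh_sq θ
  have dxc : ∀ (c : ℝ) (s : ℝ), deriv (fun a => x a * c) s = deriv x s * c :=
    fun c s => deriv_mul_const (hx s) c
  have dyc : ∀ s : ℝ, deriv (fun a => y a) s = deriv y s := fun s => rfl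
  have dcc : ∀ (c : ℝ) (p : ℝ), deriv (fun q => c * Real.cosh q) p = c * Real.sinh p := by
    intro c p
    rw [deriv_const_mul c (Real.differentiable_cosh p), Real.deriv_cosh]
  have dcs : ∀ (c : ℝ) (p : ℝ), deriv (fun q => c * Real.sinh q) p = c * Real.cosh p := by
    intro c p
    rw [deriv_const_mul c (Real.differentiable_sinh p), Real.deriv_sinh]
  set c := Real.cosh θ
  set s := Real.sinh θ
  set x' := deriv x t; set y' := deriv y t; set z' := deriv z t
  set x'' := deriv (deriv x) t; set y'' := deriv (deriv y) t; set z'' := deriv (deriv z) t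
  set w := speed3 x y z t
  set S : ℝ → ℝ → ℝ × ℝ × ℝ × ℝ :=
    fun t θ => (x t * Real.cosh θ, y t, z t, x t * Real.sinh θ) with hS
  have hpT : pderivT S t θ = (x' * c, y', z', x' * s) := by
    simp only [pderivT, hS, dxc]
    rfl
  have hpTh : pderivTh S t θ = (x t * s, 0, 0, x t * c) := by
    simp only [pderivTh, hS, dcc, dcs, deriv_const]
    rfl
  have hdx1 : (fun s : ℝ => deriv (fun a => x a * c) s) = fun s => deriv x s * c :=
    funext fun s => dxc c s
  have hdx2 : (fun s : ℝ => deriv (fun a => x a * Real.sinh θ) s)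
      = fun s => deriv x s * Real.sinh θ := funext fun s => dxc _ s
  have hpTT : pderivT (fun a b => pderivT S a b) t θ = (x'' * c, y'', z'', x'' * s) := by
    simp only [pderivT, hS]
    rw [show (fun s_1 : ℝ => deriv (fun a => x a * c) s_1) = fun s_1 => deriv x s_1 * c from
      funext fun u => dxc c u]
    rw [show (fun s_1 : ℝ => deriv (fun a => x a * s) s_1) = fun s_1 => deriv x s_1 * s from
      funext fun u => dxc s u]
    refine congrArg₂ _ (deriv_mul_const (hx2 t) c) (congrArg₂ _ rfl (congrArg₂ _ rfl ?_))
    exact deriv_mul_const (hx2 t) s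
  have hpTTh : pderivTh (fun a b => pderivT S a b) t θ = (x' * s, 0, 0, x' * c) := by
    simp only [pderivTh, pderivT, hS]
    rw [show (fun p : ℝ => deriv (fun a => x a * Real.cosh p) t) = fun p => x' * Real.cosh p from
      funext fun p => dxc _ t]
    rw [show (fun p : ℝ => deriv (fun a => x a * Real.sinh p) t) = fun p => x' * Real.sinh p from
      funext fun p => dxc _ t]
    simp only [dcc, dcs, deriv_const]
    rfl
  have hpThTh : pderivTh (fun a b => pderivTh S a b) t θ = (x t * c, 0, 0, x t * s) := by
    simp only [pderivTh, hS]
    rw [show (fun p : ℝ => deriv (fun q => x t * Real.cosh q) p) = fun p => x t * Real.sinh p from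
      funext fun p => dcc _ p]
    rw [show (fun p : ℝ => deriv (fun q => x t * Real.sinh q) p) = fun p => x t * Real.cosh p from
      funext fun p => dcs _ p]
    simp only [dcc, dcs, deriv_const]
    rfl
  set A := y t * z' - y' * z t with hA
  set B := x t * z' - x' * z t with hB
  set C := x' * y t - x t * y' with hC
  set k := (r * w)⁻¹ with hk
  have hxi : ((r * w)⁻¹ • ((A * c, B, C, A * s) : ℝ × ℝ × ℝ × ℝ))
      = ((k * (A * c), k * B, k * C, k * (A * s)) : ℝ × ℝ × ℝ × ℝ) := rfl
  have e11 : mink4 ((x' * c, y', z', x' * s) : ℝ × ℝ × ℝ × ℝ) (x' * c, y', z', x' * s)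
      = w ^ 2 := by
    simp only [mink4]; linear_combination -hw - x' ^ 2 * hcs
  have e12 : mink4 ((x' * c, y', z', x' * s) : ℝ × ℝ × ℝ × ℝ) (x t * s, 0, 0, x t * c)
      = 0 := by simp only [mink4]; ring
  have e22 : mink4 ((x t * s, 0, 0, x t * c) : ℝ × ℝ × ℝ × ℝ) (x t * s, 0, 0, x t * c)
      = x t ^ 2 := by
    simp only [mink4]; linear_combination x t ^ 2 * hcs
  have eh11 : mink4 ((x'' * c, y'', z'', x'' * s) : ℝ × ℝ × ℝ × ℝ)
      (k * (A * c), k * B, k * C, k * (A * s))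
      = k * (-(x'' * A) + y'' * B + z'' * C) := by
    simp only [mink4]; linear_combination (-(k * x'' * A)) * hcs
  have eh12 : mink4 ((x' * s, 0, 0, x' * c) : ℝ × ℝ × ℝ × ℝ)
      (k * (A * c), k * B, k * C, k * (A * s)) = 0 := by
    simp only [mink4]; ring
  have eh22 : mink4 ((x t * c, 0, 0, x t * s) : ℝ × ℝ × ℝ × ℝ)
      (k * (A * c), k * B, k * C, k * (A * s)) = -(k * (x t * A)) := by
    simp only [mink4]; linear_combination (-(k * x t * A)) * hcs
  simp only [meanCurv, hpT, hpTh, hpTT, hpTTh, hpThTh, hxi, e11, e12, e22, eh11, eh12, eh22]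
  rw [show ((r * speed3 x y z t)⁻¹ • (((y t * deriv z t - deriv y t * z t) * Real.cosh θ, x t * deriv z t - deriv x t * z t, deriv x t * y t - x t * deriv y t, (y t * deriv z t - deriv y t * z t) * Real.sinh θ) : ℝ × ℝ × ℝ × ℝ)) = ((k * (A * c), k * B, k * C, k * (A * s)) : ℝ × ℝ × ℝ × ℝ) from rfl, eh11, eh12, eh22, hk]
  have hrw : r * w ≠ 0 := by positivity
  have hxne : x t ≠ 0 := (hx0 t).ne'
  have hwne : w ≠ 0 := wpos.ne'
  have hrne : r ≠ 0 := hr.ne'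
  field_simp
  ring

/-- the surface of revolution of hyperbolic type is minimal iff the
generating curve satisfies the prescribed curvature equation. -/
theorem minimal_hyperbolic_iff (r : ℝ) (hr : 0 < r) (x y z : ℝ → ℝ)
    (hx : Differentiable ℝ x) (hx2 : Differentiable ℝ (deriv x))
    (hy : Differentiable ℝ y) (hy2 : Differentiable ℝ (deriv y))
    (hz : Differentiable ℝ z) (hz2 : Differentiable ℝ (deriv z))
    (hH2 : ∀ t : ℝ, -(x t) ^ 2 + (y t) ^ 2 + (z t) ^ 2 = -r ^ 2)
    (hx0 : ∀ t : ℝ, 0 < x t)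
    (hsp : ∀ t : ℝ, 0 < -(deriv x t) ^ 2 + (deriv y t) ^ 2 + (deriv z t) ^ 2) :
    (∀ t θ : ℝ,
      meanCurv (fun t θ => ((x t * Real.cosh θ, y t, z t, x t * Real.sinh θ) : ℝ × ℝ × ℝ × ℝ))
        (fun t θ =>
          ((r * speed3 x y z t)⁻¹ •
            (((y t * deriv z t - deriv y t * z t) * Real.cosh θ,
              x t * deriv z t - deriv x t * z t,
              deriv x t * y t - x t * deriv y t,
              (y t * deriv z t - deriv y t * z t) * Real.sinh θ) : ℝ × ℝ × ℝ × ℝ))) t θ = 0) ↔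
      ∀ t : ℝ,
        kappaH2 r x y z t
          = -(y t * deriv z t - deriv y t * z t) / (r * x t * speed3 x y z t) := by
  have key : ∀ t : ℝ, speed3 x y z t > 0 := fun t => Real.sqrt_pos.mpr (hsp t)
  constructor
  · intro h t
    have h0 := h t 0
    rw [mc_eq r hr x y z hx hx2 hy hy2 hz hz2 hx0 hsp t 0] at h0
    have wpos := key t
    have hden : 2 * r * speed3 x y z t ^ 3 * x t ≠ 0 := by
      have := hx0 t; positivity
    have hnum := (div_eq_zero_iff.mp h0).resolve_right hden
    rw [kappaH2, div_eq_div_iff (by positivity) (by have := hx0 t; positivity :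
      r * x t * speed3 x y z t ≠ 0)]
    linear_combination (-(r * speed3 x y z t)) * hnum
  · intro h t θ
    rw [mc_eq r hr x y z hx hx2 hy hy2 hz hz2 hx0 hsp t θ]
    have wpos := key t
    have ht := h t
    rw [kappaH2, div_eq_div_iff (by positivity) (by have := hx0 t; positivity :
      r * x t * speed3 x y z t ≠ 0)] at ht
    apply div_eq_zero_iff.mpr
    left
    have hrw : r * speed3 x y z t ≠ 0 := by positivity
    have h2 : (x t * (x t * (deriv (deriv y) t * deriv z t - deriv y t * deriv (deriv z) t)
        - y t * (deriv (deriv x) t * deriv z t - deriv x t * deriv (deriv z) t)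
        + z t * (deriv (deriv x) t * deriv y t - deriv x t * deriv (deriv y) t))
       - (speed3 x y z t) ^ 2 * (y t * deriv z t - deriv y t * z t)) * (r * speed3 x y z t)
       = 0 * (r * speed3 x y z t) := by linear_combination -ht
    exact mul_right_cancel₀ hrw h2
end
end

section
/- Let r > 0 and let u, v : ℝ → ℝ be twice differentiable with u(t) > 0 and (u̇, v̇) ≠ (0,0) for all t, and write γ(t) = ψ(u(t), v(t)) = (x(t), y(t), z(t)). Then the geodesic curvature κ of γ in H²(r) satisfies the minimality condition for surfaces of revolution of elliptic type, κ(t) = (x ẏ − ẋ y)/(r z ‖γ̇‖), if and only if γ is an extrinsic catenary of elliptic type, i.e., (u,v) satisfies the Euler–Lagrange equations of ∫ f(u,v)‖γ̇‖ dt with f(u,v) = sinh(u/r). In particular, the generating curve of any minimal surface of revolution of elliptic type in H³(r) is an extrinsic catenary of elliptic type. -/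
noncomputable section
open Real

/-- Minkowski inner product of `E₁³`. -/
def mink3 (X Y : ℝ × ℝ × ℝ) : ℝ := -(X.1 * Y.1) + X.2.1 * Y.2.1 + X.2.2 * Y.2.2

/-- First component of `γ(t) = ψ(u(t), v(t))` (semi-geodesic parametrization). -/
def gX (r : ℝ) (u v : ℝ → ℝ) (t : ℝ) : ℝ :=
  r * Real.cosh (u t / r) * Real.cosh (v t / r)

/-- Second component of `γ(t) = ψ(u(t), v(t))`. -/
def gY (r : ℝ) (u v : ℝ → ℝ) (t : ℝ) : ℝ :=
  r * Real.cosh (u t / r) * Real.sinh (v t / r)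

/-- Third component of `γ(t) = ψ(u(t), v(t))`. -/
def gZ (r : ℝ) (u v : ℝ → ℝ) (t : ℝ) : ℝ :=
  r * Real.sinh (u t / r)

/-- `‖γ̇‖` in semi-geodesic coordinates: `√(u̇² + cosh²(u/r) v̇²)`. -/
def speedSG (r : ℝ) (u v : ℝ → ℝ) (t : ℝ) : ℝ :=
  Real.sqrt ((deriv u t) ^ 2 + (Real.cosh (u t / r)) ^ 2 * (deriv v t) ^ 2)

/-- Geodesic curvature of `γ(t) = ψ(u(t), v(t))` in `H²(r)`. -/
def kappaSG (r : ℝ) (u v : ℝ → ℝ) (t : ℝ) : ℝ :=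
  kappaH2 r (gX r u v) (gY r u v) (gZ r u v) t

/-- The Euler–Lagrange equations of the functional `∫ f(u,v) ‖γ̇‖ dt` in
semi-geodesic coordinates. -/
def EulerLagrange (r : ℝ) (f : ℝ → ℝ → ℝ) (u v : ℝ → ℝ) : Prop :=
  ∀ t : ℝ,
    deriv (fun a => f a (v t)) (u t) * speedSG r u v t
        + f (u t) (v t) * Real.sinh (u t / r) * Real.cosh (u t / r) * (deriv v t) ^ 2
          / (r * speedSG r u v t)
      = deriv (fun s => f (u s) (v s) * deriv u s / speedSG r u v s) t
    ∧ deriv (fun b => f (u t) b) (v t) * speedSG r u v t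
      = deriv (fun s =>
          f (u s) (v s) * deriv v s * (Real.cosh (u s / r)) ^ 2 / speedSG r u v s) t

section Derivs
variable (r : ℝ) (u v : ℝ → ℝ)

lemma hd_cu (hr : r ≠ 0) (hu : Differentiable ℝ u) (t : ℝ) :
    HasDerivAt (fun t => Real.cosh (u t / r)) (Real.sinh (u t / r) * (deriv u t / r)) t :=
  (((hu t).hasDerivAt).div_const r).cosh

lemma hd_su (hr : r ≠ 0) (hu : Differentiable ℝ u) (t : ℝ) :
    HasDerivAt (fun t => Real.sinh (u t / r)) (Real.cosh (u t / r) * (deriv u t / r)) t :=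
  (((hu t).hasDerivAt).div_const r).sinh

lemma hd_gX (hr : r ≠ 0) (hu : Differentiable ℝ u) (hv : Differentiable ℝ v) (t : ℝ) :
    HasDerivAt (gX r u v)
      (deriv u t * Real.sinh (u t / r) * Real.cosh (v t / r)
        + deriv v t * Real.cosh (u t / r) * Real.sinh (v t / r)) t := by
  have h := ((hd_cu r u hr hu t).const_mul r).mul (hd_cu r v hr hv t)
  refine h.congr_deriv ?_
  field_simp

lemma hd_gY (hr : r ≠ 0) (hu : Differentiable ℝ u) (hv : Differentiable ℝ v) (t : ℝ) :
    HasDerivAt (gY r u v)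
      (deriv u t * Real.sinh (u t / r) * Real.sinh (v t / r)
        + deriv v t * Real.cosh (u t / r) * Real.cosh (v t / r)) t := by
  have h := ((hd_cu r u hr hu t).const_mul r).mul (hd_su r v hr hv t)
  refine h.congr_deriv ?_
  field_simp

lemma hd_gZ (hr : r ≠ 0) (hu : Differentiable ℝ u) (t : ℝ) :
    HasDerivAt (gZ r u v) (deriv u t * Real.cosh (u t / r)) t := by
  have h := (hd_su r u hr hu t).const_mul r
  refine h.congr_deriv ?_
  field_simp

lemma deriv_gX (hr : r ≠ 0) (hu : Differentiable ℝ u) (hv : Differentiable ℝ v) :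
    deriv (gX r u v) = fun t =>
    deriv u t * Real.sinh (u t / r) * Real.cosh (v t / r)
      + deriv v t * Real.cosh (u t / r) * Real.sinh (v t / r) :=
  funext fun t => (hd_gX r u v hr hu hv t).deriv

lemma deriv_gY (hr : r ≠ 0) (hu : Differentiable ℝ u) (hv : Differentiable ℝ v) :
    deriv (gY r u v) = fun t =>
    deriv u t * Real.sinh (u t / r) * Real.sinh (v t / r)
      + deriv v t * Real.cosh (u t / r) * Real.cosh (v t / r) :=
  funext fun t => (hd_gY r u v hr hu hv t).deriv

lemma deriv_gZ (hr : r ≠ 0) (hu : Differentiable ℝ u) :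
    deriv (gZ r u v) = fun t => deriv u t * Real.cosh (u t / r) :=
  funext fun t => (hd_gZ r u v hr hu t).deriv

lemma deriv2_gX (hr : r ≠ 0) (hu : Differentiable ℝ u) (hv : Differentiable ℝ v)
    (hu2 : Differentiable ℝ (deriv u)) (hv2 : Differentiable ℝ (deriv v)) (t : ℝ) :
    deriv (deriv (gX r u v)) t =
    deriv (deriv u) t * Real.sinh (u t / r) * Real.cosh (v t / r)
      + deriv (deriv v) t * Real.cosh (u t / r) * Real.sinh (v t / r)
      + ((deriv u t) ^ 2 * Real.cosh (u t / r) * Real.cosh (v t / r)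
          + 2 * deriv u t * deriv v t * Real.sinh (u t / r) * Real.sinh (v t / r)
          + (deriv v t) ^ 2 * Real.cosh (u t / r) * Real.cosh (v t / r)) / r := by
  rw [deriv_gX r u v hr hu hv]
  have h := (((hu2 t).hasDerivAt.mul (hd_su r u hr hu t)).mul (hd_cu r v hr hv t)).add
    (((hv2 t).hasDerivAt.mul (hd_cu r u hr hu t)).mul (hd_su r v hr hv t))
  erw [h.deriv]
  simp only [Pi.mul_apply, Pi.add_apply]
  field_simp; ring

lemma deriv2_gY (hr : r ≠ 0) (hu : Differentiable ℝ u) (hv : Differentiable ℝ v)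
    (hu2 : Differentiable ℝ (deriv u)) (hv2 : Differentiable ℝ (deriv v)) (t : ℝ) :
    deriv (deriv (gY r u v)) t =
    deriv (deriv u) t * Real.sinh (u t / r) * Real.sinh (v t / r)
      + deriv (deriv v) t * Real.cosh (u t / r) * Real.cosh (v t / r)
      + ((deriv u t) ^ 2 * Real.cosh (u t / r) * Real.sinh (v t / r)
          + 2 * deriv u t * deriv v t * Real.sinh (u t / r) * Real.cosh (v t / r)
          + (deriv v t) ^ 2 * Real.cosh (u t / r) * Real.sinh (v t / r)) / r := by
  rw [deriv_gY r u v hr hu hv]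
  have h := (((hu2 t).hasDerivAt.mul (hd_su r u hr hu t)).mul (hd_su r v hr hv t)).add
    (((hv2 t).hasDerivAt.mul (hd_cu r u hr hu t)).mul (hd_cu r v hr hv t))
  erw [h.deriv]
  simp only [Pi.mul_apply, Pi.add_apply]
  field_simp; ring

lemma deriv2_gZ (hr : r ≠ 0) (hu : Differentiable ℝ u)
    (hu2 : Differentiable ℝ (deriv u)) (t : ℝ) :
    deriv (deriv (gZ r u v)) t =
    deriv (deriv u) t * Real.cosh (u t / r) + (deriv u t) ^ 2 * Real.sinh (u t / r) / r := by
  rw [deriv_gZ r u v hr hu]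
  have h := (hu2 t).hasDerivAt.mul (hd_cu r u hr hu t)
  erw [h.deriv]
  field_simp

end Derivs
lemma main_pt (r : ℝ) (hr : 0 < r) (u v : ℝ → ℝ)
    (hupos : ∀ t : ℝ, 0 < u t)
    (hu : Differentiable ℝ u) (hu2 : Differentiable ℝ (deriv u))
    (hv : Differentiable ℝ v) (hv2 : Differentiable ℝ (deriv v))
    (hreg : ∀ t : ℝ, (deriv u t, deriv v t) ≠ (0, 0)) (t : ℝ) :
    (kappaSG r u v t
        = (gX r u v t * deriv (gY r u v) t - deriv (gX r u v) t * gY r u v t)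
          / (r * gZ r u v t * speed3 (gX r u v) (gY r u v) (gZ r u v) t)) ↔
    ((deriv (fun y => Real.sinh (y / r)) (u t) * speedSG r u v t
        + Real.sinh (u t / r) * Real.sinh (u t / r) * Real.cosh (u t / r) * (deriv v t) ^ 2
          / (r * speedSG r u v t)
      = deriv (fun p => Real.sinh (u p / r) * deriv u p / speedSG r u v p) t)
    ∧ (deriv (fun y => Real.sinh (u t / r)) (v t) * speedSG r u v t
      = deriv (fun p =>
          Real.sinh (u p / r) * deriv v p * (Real.cosh (u p / r)) ^ 2 / speedSG r u v p) t)) := by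
  have hr0 : r ≠ 0 := hr.ne'
  -- positivity facts
  have hqpos : 0 < (deriv u t) ^ 2 + Real.cosh (u t / r) ^ 2 * (deriv v t) ^ 2 := by
    have hab : ¬ (deriv u t = 0 ∧ deriv v t = 0) := by
      intro h; exact hreg t (by rw [h.1, h.2])
    rcases not_and_or.mp hab with h | h
    · have h1 : 0 < (deriv u t) ^ 2 := pow_two_pos_of_ne_zero h
      nlinarith [sq_nonneg (Real.cosh (u t / r) * deriv v t)]
    · have h1 : 0 < (deriv v t) ^ 2 := pow_two_pos_of_ne_zero h
      have h2 : 1 ≤ Real.cosh (u t / r) ^ 2 := by nlinarith [Real.one_le_cosh (u t / r)]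
      nlinarith [sq_nonneg (deriv u t), mul_le_mul_of_nonneg_right h2 (sq_nonneg (deriv v t))]
  have hwpos : 0 < speedSG r u v t := Real.sqrt_pos.mpr hqpos
  have hw : speedSG r u v t ^ 2 = (deriv u t) ^ 2 + Real.cosh (u t / r) ^ 2 * (deriv v t) ^ 2 :=
    Real.sq_sqrt hqpos.le
  have hs : 0 < Real.sinh (u t / r) := by
    rw [Real.sinh_pos_iff]; exact div_pos (hupos t) hr
  have hcpos : 0 < Real.cosh (u t / r) := Real.cosh_pos _
  have hc : Real.cosh (u t / r) ^ 2 = Real.sinh (u t / r) ^ 2 + 1 := Real.cosh_sq _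
  have hC : Real.cosh (v t / r) ^ 2 = Real.sinh (v t / r) ^ 2 + 1 := Real.cosh_sq _
  -- first derivatives
  have hx1 : deriv (gX r u v) t = deriv u t * Real.sinh (u t / r) * Real.cosh (v t / r)
      + deriv v t * Real.cosh (u t / r) * Real.sinh (v t / r) :=
    congrFun (deriv_gX r u v hr0 hu hv) t
  have hy1 : deriv (gY r u v) t = deriv u t * Real.sinh (u t / r) * Real.sinh (v t / r)
      + deriv v t * Real.cosh (u t / r) * Real.cosh (v t / r) :=
    congrFun (deriv_gY r u v hr0 hu hv) t
  have hz1 : deriv (gZ r u v) t = deriv u t * Real.cosh (u t / r) :=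
    congrFun (deriv_gZ r u v hr0 hu) t
  -- speed equality
  have hsp : speed3 (gX r u v) (gY r u v) (gZ r u v) t = speedSG r u v t := by
    unfold speed3 speedSG
    rw [hx1, hy1, hz1]
    congr 1
    linear_combination ((deriv v t)^2 * Real.cosh (u t / r)^2
      - (deriv u t)^2 * Real.sinh (u t / r)^2) * hC + (deriv u t)^2 * hc
  -- second derivatives (multiplied by r)
  have hX2 : r * deriv (deriv (gX r u v)) t =
      r * deriv (deriv u) t * Real.sinh (u t / r) * Real.cosh (v t / r)
      + r * deriv (deriv v) t * Real.cosh (u t / r) * Real.sinh (v t / r)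
      + ((deriv u t) ^ 2 * Real.cosh (u t / r) * Real.cosh (v t / r)
          + 2 * deriv u t * deriv v t * Real.sinh (u t / r) * Real.sinh (v t / r)
          + (deriv v t) ^ 2 * Real.cosh (u t / r) * Real.cosh (v t / r)) := by
    rw [deriv2_gX r u v hr0 hu hv hu2 hv2 t]; field_simp
  have hY2 : r * deriv (deriv (gY r u v)) t =
      r * deriv (deriv u) t * Real.sinh (u t / r) * Real.sinh (v t / r)
      + r * deriv (deriv v) t * Real.cosh (u t / r) * Real.cosh (v t / r)
      + ((deriv u t) ^ 2 * Real.cosh (u t / r) * Real.sinh (v t / r)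
          + 2 * deriv u t * deriv v t * Real.sinh (u t / r) * Real.cosh (v t / r)
          + (deriv v t) ^ 2 * Real.cosh (u t / r) * Real.sinh (v t / r)) := by
    rw [deriv2_gY r u v hr0 hu hv hu2 hv2 t]; field_simp
  have hZ2 : r * deriv (deriv (gZ r u v)) t =
      r * deriv (deriv u) t * Real.cosh (u t / r) + (deriv u t) ^ 2 * Real.sinh (u t / r) := by
    rw [deriv2_gZ r u v hr0 hu hu2 t]; field_simp
  -- derivative of sinh (·/r)
  have hds : deriv (fun y => Real.sinh (y / r)) (u t) = Real.cosh (u t / r) / r := by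
    rw [(((hasDerivAt_id' (x := u t)).div_const r).sinh).deriv]; ring
  -- derivative of the speed
  have hwd : HasDerivAt (speedSG r u v)
      ((2 * deriv u t * deriv (deriv u) t
        + (2 * Real.cosh (u t / r) * (Real.sinh (u t / r) * (deriv u t / r))) * (deriv v t) ^ 2
        + Real.cosh (u t / r) ^ 2 * (2 * deriv v t * deriv (deriv v) t))
        / (2 * speedSG r u v t)) t := by
    have hq' : HasDerivAt (fun t => (deriv u t) ^ 2 + Real.cosh (u t / r) ^ 2 * (deriv v t) ^ 2)
        (2 * deriv u t * deriv (deriv u) t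
          + ((2 * Real.cosh (u t / r) * (Real.sinh (u t / r) * (deriv u t / r))) * (deriv v t) ^ 2
            + Real.cosh (u t / r) ^ 2 * (2 * deriv v t * deriv (deriv v) t))) t := by
      have h1 := ((hu2 t).hasDerivAt).pow 2
      have h2 := ((hd_cu r u hr0 hu t).pow 2).mul (((hv2 t).hasDerivAt).pow 2)
      have := h1.add h2
      refine this.congr_deriv ?_
      push_cast; simp only [Pi.mul_apply, Pi.pow_apply]; ring
    have h3 := hq'.sqrt hqpos.ne'
    have hrw : Real.sqrt (deriv u t ^ 2 + Real.cosh (u t / r) ^ 2 * deriv v t ^ 2)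
        = speedSG r u v t := rfl
    rw [hrw] at h3
    refine h3.congr_deriv ?_
    ring
  -- derivative of the first Euler-Lagrange right-hand side
  have hF1 : deriv (fun p => Real.sinh (u p / r) * deriv u p / speedSG r u v p) t =
      ((Real.cosh (u t / r) * deriv u t ^ 2 + r * Real.sinh (u t / r) * deriv (deriv u) t)
          * speedSG r u v t ^ 2
        - Real.sinh (u t / r) * deriv u t
          * (r * deriv u t * deriv (deriv u) t
            + Real.cosh (u t / r) * Real.sinh (u t / r) * deriv u t * deriv v t ^ 2
            + r * Real.cosh (u t / r) ^ 2 * deriv v t * deriv (deriv v) t))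
        / (r * speedSG r u v t ^ 3) := by
    have hg : HasDerivAt (fun p => Real.sinh (u p / r) * deriv u p)
        (Real.cosh (u t / r) * (deriv u t / r) * deriv u t
          + Real.sinh (u t / r) * deriv (deriv u) t) t :=
      (hd_su r u hr0 hu t).mul ((hu2 t).hasDerivAt)
    erw [(hg.div hwd hwpos.ne').deriv]
    field_simp
    all_goals ring
  -- derivative of the second Euler-Lagrange right-hand side
  have hF2 : deriv (fun p =>
        Real.sinh (u p / r) * deriv v p * (Real.cosh (u p / r)) ^ 2 / speedSG r u v p) t =
      ((deriv u t * deriv v t * Real.cosh (u t / r) ^ 3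
          + r * Real.sinh (u t / r) * deriv (deriv v) t * Real.cosh (u t / r) ^ 2
          + 2 * deriv u t * deriv v t * Real.cosh (u t / r) * Real.sinh (u t / r) ^ 2)
          * speedSG r u v t ^ 2
        - Real.sinh (u t / r) * deriv v t * Real.cosh (u t / r) ^ 2
          * (r * deriv u t * deriv (deriv u) t
            + Real.cosh (u t / r) * Real.sinh (u t / r) * deriv u t * deriv v t ^ 2
            + r * Real.cosh (u t / r) ^ 2 * deriv v t * deriv (deriv v) t))
        / (r * speedSG r u v t ^ 3) := by
    have hg : HasDerivAt (fun p => Real.sinh (u p / r) * deriv v p * (Real.cosh (u p / r)) ^ 2)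
        ((Real.cosh (u t / r) * (deriv u t / r) * deriv v t
            + Real.sinh (u t / r) * deriv (deriv v) t) * (Real.cosh (u t / r)) ^ 2
          + Real.sinh (u t / r) * deriv v t
            * (2 * Real.cosh (u t / r) ^ 1 * (Real.sinh (u t / r) * (deriv u t / r)))) t := by
      have h1 := ((hd_su r u hr0 hu t).mul ((hv2 t).hasDerivAt)).mul ((hd_cu r u hr0 hu t).pow 2)
      refine h1.congr_deriv ?_
      push_cast; simp only [Pi.mul_apply, Pi.pow_apply]
    erw [(hg.div hwd hwpos.ne').deriv]
    field_simp
    all_goals ring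
  -- nonvanishing denominators
  have hd1 : r * speedSG r u v t ^ 3 ≠ 0 := mul_ne_zero hr0 (pow_ne_zero 3 hwpos.ne')
  have hd2 : r * (r * Real.sinh (u t / r)) * speedSG r u v t ≠ 0 :=
    mul_ne_zero (mul_ne_zero hr0 (mul_ne_zero hr0 hs.ne')) hwpos.ne'
  -- rewrite the goal
  simp only [kappaSG, kappaH2, gX, gY, gZ]
  rw [hsp, hx1, hy1, hz1, hds, hF1, hF2]
  simp only [deriv_const']
  rw [div_eq_div_iff hd1 hd2]
  set a := deriv u t with ha
  set b := deriv v t with hb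
  set A := deriv (deriv u) t with hA
  set B := deriv (deriv v) t with hB
  set s := Real.sinh (u t / r) with hsdef
  set c := Real.cosh (u t / r) with hcdef
  set S := Real.sinh (v t / r) with hSdef
  set C := Real.cosh (v t / r) with hCdef
  set w := speedSG r u v t with hwdef
  set dx := deriv (deriv (gX r u v)) t with hdx
  set dy := deriv (deriv (gY r u v)) t with hdy
  set dz := deriv (deriv (gZ r u v)) t with hdz
  have hw0 : w ≠ 0 := hwpos.ne'
  rw [show c / r * w + s * s * c * b ^ 2 / (r * w)
      = (c * w ^ 4 + s ^ 2 * c * b ^ 2 * w ^ 2) / (r * w ^ 3) from by field_simp]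
  rw [div_left_inj' hd1]
  rw [show (0 * w =
      ((a * b * c ^ 3 + r * s * B * c ^ 2 + 2 * a * b * c * s ^ 2) * w ^ 2 -
        s * b * c ^ 2 * (r * a * A + c * s * a * b ^ 2 + r * c ^ 2 * b * B)) / (r * w ^ 3))
      ↔ ((a * b * c ^ 3 + r * s * B * c ^ 2 + 2 * a * b * c * s ^ 2) * w ^ 2 -
        s * b * c ^ 2 * (r * a * A + c * s * a * b ^ 2 + r * c ^ 2 * b * B) = 0) from by
    rw [zero_mul, eq_comm, div_eq_zero_iff, or_iff_left hd1]]
  constructor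
  · intro hE
    have h0 : (r ^ 2 * w) * (r*c*s*(A*b - a*B) - a^2*b*(2*s^2+c^2) - b^3*c^2*(s^2+c^2)) = 0 := by
      linear_combination hE - (-1*r^2*a*s^3*S*w + r^2*a*s*c^2*S*w + -1*r^2*b*s^2*c*C*w) * hX2 - (r^2*a*s^3*C*w + -1*r^2*a*s*c^2*C*w + r^2*b*s^2*c*S*w) * hY2 - (-1*r^2*b*s*c^2*S^2*w + r^2*b*s*c^2*C^2*w) * hZ2 - (r^2*b*c^2*S^2*w + -1*r^2*b*c^2*C^2*w) * hw - (r^3*a*B*s*c*S^2*w + -1*r^3*a*B*s*c*C^2*w + -1*r^3*b*A*s*c*S^2*w + r^3*b*A*s*c*C^2*w + 2*r^2*a^2*b*s^2*S^2*w + -2*r^2*a^2*b*s^2*C^2*w + r^2*a^2*b*S^2*w + -1*r^2*a^2*b*C^2*w + r^2*a^2*b*w + 2*r^2*b^3*s^2*S^2*w + -2*r^2*b^3*s^2*C^2*w + 2*r^2*b^3*s^2*w + r^2*b^3*c^2*S^2*w + -1*r^2*b^3*c^2*C^2*w + r^2*b^3*c^2*w + r^2*b^3*S^2*w + -1*r^2*b^3*C^2*w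 + r^2*b^3*w) * hc - (-1*r^3*a*B*s*c*w + r^3*b*A*s*c*w + -3*r^2*a^2*b*s^2*w + -1*r^2*a^2*b*w + -2*r^2*b^3*s^4*w + -3*r^2*b^3*s^2*w + -1*r^2*b^3*w) * hC
    have hM : (r*c*s*(A*b - a*B) - a^2*b*(2*s^2+c^2) - b^3*c^2*(s^2+c^2)) = 0 :=
      (mul_eq_zero.mp h0).resolve_left (mul_pos (pow_pos hr 2) hwpos).ne'
    constructor
    · linear_combination (-(c*b)) * hM + (-1*r*A*s + b^2*s^2*c + b^2*c^3 + c*w^2) * hw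
    · linear_combination (-(c*a)) * hM + (r*B*s*c^2 + 2*a*b*s^2*c + a*b*c^3) * hw
  · rintro ⟨h1, h2⟩
    have hcb : c * (b * (r*c*s*(A*b - a*B) - a^2*b*(2*s^2+c^2) - b^3*c^2*(s^2+c^2))) = 0 := by
      linear_combination -h1 + (-1*r*A*s + b^2*s^2*c + b^2*c^3 + c*w^2) * hw
    have hca : c * (a * (r*c*s*(A*b - a*B) - a^2*b*(2*s^2+c^2) - b^3*c^2*(s^2+c^2))) = 0 := by
      linear_combination -h2 + (r*B*s*c^2 + 2*a*b*s^2*c + a*b*c^3) * hw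
    have hbM : b * (r*c*s*(A*b - a*B) - a^2*b*(2*s^2+c^2) - b^3*c^2*(s^2+c^2)) = 0 := (mul_eq_zero.mp hcb).resolve_left hcpos.ne'
    have haM : a * (r*c*s*(A*b - a*B) - a^2*b*(2*s^2+c^2) - b^3*c^2*(s^2+c^2)) = 0 := (mul_eq_zero.mp hca).resolve_left hcpos.ne'
    have hM : (r*c*s*(A*b - a*B) - a^2*b*(2*s^2+c^2) - b^3*c^2*(s^2+c^2)) = 0 := by
      have hab : ¬ (a = 0 ∧ b = 0) := fun h => hreg t (by rw [← ha, ← hb, h.1, h.2])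
      rcases not_and_or.mp hab with h | h
      · exact (mul_eq_zero.mp haM).resolve_left h
      · exact (mul_eq_zero.mp hbM).resolve_left h
    linear_combination (r^2*w) * hM + (-1*r^2*a*s^3*S*w + r^2*a*s*c^2*S*w + -1*r^2*b*s^2*c*C*w) * hX2 + (r^2*a*s^3*C*w + -1*r^2*a*s*c^2*C*w + r^2*b*s^2*c*S*w) * hY2 + (-1*r^2*b*s*c^2*S^2*w + r^2*b*s*c^2*C^2*w) * hZ2 + (r^2*b*c^2*S^2*w + -1*r^2*b*c^2*C^2*w) * hw + (r^3*a*B*s*c*S^2*w + -1*r^3*a*B*s*c*C^2*w + -1*r^3*b*A*s*c*S^2*w + r^3*b*A*s*c*C^2*w + 2*r^2*a^2*b*s^2*S^2*w + -2*r^2*a^2*b*s^2*C^2*w + r^2*a^2*b*S^2*w + -1*r^2*a^2*b*C^2*w + r^2*a^2*b*w + 2*r^2*b^3*s^2*S^2*w + -2*r^2*b^3*s^2*C^2*w + 2*r^2*b^3*s^2*w + r^2*b^3*c^2*S^2*w + -1*r^2*b^3*c^2*C^2*w + r^2*b^3*c^2*w + r^2*b^3*S^2*w + -1*r^2*b^3*C^2*w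 + r^2*b^3*w) * hc + (-1*r^3*a*B*s*c*w + r^3*b*A*s*c*w + -3*r^2*a^2*b*s^2*w + -1*r^2*a^2*b*w + -2*r^2*b^3*s^4*w + -3*r^2*b^3*s^2*w + -1*r^2*b^3*w) * hC
/-- minimality condition for elliptic surfaces of revolution holds iff
the generating curve is an extrinsic catenary of elliptic type. -/
theorem minimal_elliptic_iff_extrinsic_catenary (r : ℝ) (hr : 0 < r) (u v : ℝ → ℝ)
    (hupos : ∀ t : ℝ, 0 < u t)
    (hu : Differentiable ℝ u) (hu2 : Differentiable ℝ (deriv u))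
    (hv : Differentiable ℝ v) (hv2 : Differentiable ℝ (deriv v))
    (hreg : ∀ t : ℝ, (deriv u t, deriv v t) ≠ (0, 0)) :
    (∀ t : ℝ,
      kappaSG r u v t
        = (gX r u v t * deriv (gY r u v) t - deriv (gX r u v) t * gY r u v t)
          / (r * gZ r u v t * speed3 (gX r u v) (gY r u v) (gZ r u v) t)) ↔
      EulerLagrange r (fun a _ => Real.sinh (a / r)) u v := by
  exact ⟨fun h t => (main_pt r hr u v hupos hu hu2 hv hv2 hreg t).mp (h t),
    fun h t => (main_pt r hr u v hupos hu hu2 hv hv2 hreg t).mpr (h t)⟩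
end
end

section
/- Let r > 0 and let u, v : ℝ → ℝ be twice differentiable with (u̇, v̇) ≠ (0,0) for all t, and write γ(t) = ψ(u(t), v(t)) = (x(t), y(t), z(t)). Then the geodesic curvature κ of γ in H²(r) satisfies the minimality condition for surfaces of revolution of hyperbolic type, κ(t) = −(y ż − ẏ z)/(r x ‖γ̇‖), if and only if γ is an extrinsic catenary of hyperbolic type, i.e., (u,v) satisfies the Euler–Lagrange equations of ∫ f(u,v)‖γ̇‖ dt with f(u,v) = cosh(u/r)cosh(v/r). In particular, the generating curve of any minimal surface of revolution of hyperbolic type in H³(r) is an extrinsic catenary of hyperbolic type. -/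
noncomputable section
open Real

/-- The "normal equation" expression: the curve is an extrinsic catenary of hyperbolic
type iff this vanishes identically. -/
def NE (r : ℝ) (u v : ℝ → ℝ) (t : ℝ) : ℝ :=
  Real.cosh (u t / r) * Real.cosh (v t / r) * r * Real.cosh (u t / r) ^ 2 *
      (deriv u t * deriv (deriv v) t - deriv v t * deriv (deriv u) t)
    + 2 * deriv v t ^ 3 * Real.sinh (u t / r) * Real.cosh (v t / r) * Real.cosh (u t / r) ^ 4
    + 3 * deriv u t ^ 2 * deriv v t * Real.sinh (u t / r) * Real.cosh (v t / r)
        * Real.cosh (u t / r) ^ 2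
    - deriv u t * deriv v t ^ 2 * Real.cosh (u t / r) ^ 3 * Real.sinh (v t / r)
    - deriv u t ^ 3 * Real.cosh (u t / r) * Real.sinh (v t / r)

set_option maxHeartbeats 2000000 in
/-- minimality condition for hyperbolic surfaces of revolution holds iff
the generating curve is an extrinsic catenary of hyperbolic type. -/
theorem minimal_hyperbolic_iff_extrinsic_catenary (r : ℝ) (hr : 0 < r) (u v : ℝ → ℝ)
    (hu : Differentiable ℝ u) (hu2 : Differentiable ℝ (deriv u))
    (hv : Differentiable ℝ v) (hv2 : Differentiable ℝ (deriv v))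
    (hreg : ∀ t : ℝ, (deriv u t, deriv v t) ≠ (0, 0)) :
    (∀ t : ℝ,
      kappaSG r u v t
        = -(gY r u v t * deriv (gZ r u v) t - deriv (gY r u v) t * gZ r u v t)
          / (r * gX r u v t * speed3 (gX r u v) (gY r u v) (gZ r u v) t)) ↔
      EulerLagrange r (fun a b => Real.cosh (a / r) * Real.cosh (b / r)) u v := by
  have hrne : r ≠ 0 := hr.ne'
  have hddu : ∀ t, HasDerivAt (deriv u) (deriv (deriv u) t) t := fun t => (hu2 t).hasDerivAt
  have hddv : ∀ t, HasDerivAt (deriv v) (deriv (deriv v) t) t := fun t => (hv2 t).hasDerivAt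
  have hcu : ∀ t, HasDerivAt (fun τ => Real.cosh (u τ / r))
      (Real.sinh (u t / r) * (deriv u t / r)) t :=
    fun t => (((hu t).hasDerivAt).div_const r).cosh
  have hsu : ∀ t, HasDerivAt (fun τ => Real.sinh (u τ / r))
      (Real.cosh (u t / r) * (deriv u t / r)) t :=
    fun t => (((hu t).hasDerivAt).div_const r).sinh
  have hcv : ∀ t, HasDerivAt (fun τ => Real.cosh (v τ / r))
      (Real.sinh (v t / r) * (deriv v t / r)) t :=
    fun t => (((hv t).hasDerivAt).div_const r).cosh
  have hsv : ∀ t, HasDerivAt (fun τ => Real.sinh (v τ / r))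
      (Real.cosh (v t / r) * (deriv v t / r)) t :=
    fun t => (((hv t).hasDerivAt).div_const r).sinh
  -- first derivatives of the components
  have hgX : ∀ t, HasDerivAt (gX r u v)
      (deriv u t * Real.sinh (u t / r) * Real.cosh (v t / r)
        + deriv v t * Real.cosh (u t / r) * Real.sinh (v t / r)) t := fun t =>
    (((hcu t).const_mul r).mul (hcv t)).congr_deriv (by field_simp)
  have hgY : ∀ t, HasDerivAt (gY r u v)
      (deriv u t * Real.sinh (u t / r) * Real.sinh (v t / r)
        + deriv v t * Real.cosh (u t / r) * Real.cosh (v t / r)) t := fun t =>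
    (((hcu t).const_mul r).mul (hsv t)).congr_deriv (by field_simp)
  have hgZ : ∀ t, HasDerivAt (gZ r u v) (deriv u t * Real.cosh (u t / r)) t := fun t =>
    ((hsu t).const_mul r).congr_deriv (by field_simp)
  have hdX : deriv (gX r u v) = fun t =>
      deriv u t * Real.sinh (u t / r) * Real.cosh (v t / r)
        + deriv v t * Real.cosh (u t / r) * Real.sinh (v t / r) :=
    funext fun t => (hgX t).deriv
  have hdY : deriv (gY r u v) = fun t =>
      deriv u t * Real.sinh (u t / r) * Real.sinh (v t / r)
        + deriv v t * Real.cosh (u t / r) * Real.cosh (v t / r) :=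
    funext fun t => (hgY t).deriv
  have hdZ : deriv (gZ r u v) = fun t => deriv u t * Real.cosh (u t / r) :=
    funext fun t => (hgZ t).deriv
  -- second derivatives
  have hgX2 : ∀ t, deriv (fun t =>
      deriv u t * Real.sinh (u t / r) * Real.cosh (v t / r)
        + deriv v t * Real.cosh (u t / r) * Real.sinh (v t / r)) t
      = deriv (deriv u) t * Real.sinh (u t / r) * Real.cosh (v t / r)
        + deriv (deriv v) t * Real.cosh (u t / r) * Real.sinh (v t / r)
        + (deriv u t ^ 2 * Real.cosh (u t / r) * Real.cosh (v t / r)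
            + 2 * deriv u t * deriv v t * Real.sinh (u t / r) * Real.sinh (v t / r)
            + deriv v t ^ 2 * Real.cosh (u t / r) * Real.cosh (v t / r)) / r := fun t =>
    (((((hddu t).mul (hsu t)).mul (hcv t)).add
        (((hddv t).mul (hcu t)).mul (hsv t))).congr_deriv (by simp only [Pi.mul_apply, Pi.pow_apply]; field_simp; ring)).deriv
  have hgY2 : ∀ t, deriv (fun t =>
      deriv u t * Real.sinh (u t / r) * Real.sinh (v t / r)
        + deriv v t * Real.cosh (u t / r) * Real.cosh (v t / r)) t
      = deriv (deriv u) t * Real.sinh (u t / r) * Real.sinh (v t / r)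
        + deriv (deriv v) t * Real.cosh (u t / r) * Real.cosh (v t / r)
        + (deriv u t ^ 2 * Real.cosh (u t / r) * Real.sinh (v t / r)
            + 2 * deriv u t * deriv v t * Real.sinh (u t / r) * Real.cosh (v t / r)
            + deriv v t ^ 2 * Real.cosh (u t / r) * Real.sinh (v t / r)) / r := fun t =>
    (((((hddu t).mul (hsu t)).mul (hsv t)).add
        (((hddv t).mul (hcu t)).mul (hcv t))).congr_deriv (by simp only [Pi.mul_apply, Pi.pow_apply]; field_simp; ring)).deriv
  have hgZ2 : ∀ t, deriv (fun t => deriv u t * Real.cosh (u t / r)) t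
      = deriv (deriv u) t * Real.cosh (u t / r)
        + deriv u t ^ 2 * Real.sinh (u t / r) / r := fun t =>
    (((hddu t).mul (hcu t)).congr_deriv (by field_simp)).deriv
  -- positivity of the conformal factor
  have hQpos : ∀ t, 0 < deriv u t ^ 2 + Real.cosh (u t / r) ^ 2 * deriv v t ^ 2 := by
    intro t
    rcases eq_or_ne (deriv u t) 0 with ha | ha
    · rcases eq_or_ne (deriv v t) 0 with hb | hb
      · exact absurd (by rw [ha, hb]) (hreg t)
      · have h2 : 0 < deriv v t ^ 2 :=
          lt_of_le_of_ne (sq_nonneg _) (Ne.symm (pow_ne_zero 2 hb))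
        exact add_pos_of_nonneg_of_pos (sq_nonneg _)
          (mul_pos (pow_pos (Real.cosh_pos _) 2) h2)
    · have h1 : 0 < deriv u t ^ 2 :=
        lt_of_le_of_ne (sq_nonneg _) (Ne.symm (pow_ne_zero 2 ha))
      exact add_pos_of_pos_of_nonneg h1 (by positivity)
  have hWpos : ∀ t, 0 < speedSG r u v t := fun t => Real.sqrt_pos.mpr (hQpos t)
  have hWsq : ∀ t, speedSG r u v t ^ 2
      = deriv u t ^ 2 + Real.cosh (u t / r) ^ 2 * deriv v t ^ 2 :=
    fun t => Real.sq_sqrt (hQpos t).le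
  -- the speeds agree
  have hsp : ∀ t, speed3 (gX r u v) (gY r u v) (gZ r u v) t = speedSG r u v t := by
    intro t
    have hcsqu : Real.cosh (u t / r) ^ 2 = Real.sinh (u t / r) ^ 2 + 1 := Real.cosh_sq _
    have hcsqv : Real.cosh (v t / r) ^ 2 = Real.sinh (v t / r) ^ 2 + 1 := Real.cosh_sq _
    simp only [speed3, speedSG, hdX, hdY, hdZ]
    congr 1
    linear_combination
      ((-1:ℝ)*(deriv v t)^2 + (deriv v t)^2*(Real.cosh (v t / r))^2 + (-1:ℝ)*(deriv v t)^2*(Real.sinh (v t / r))^2 + (deriv u t)^2) * hcsqu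
        + ((deriv v t)^2 + (deriv v t)^2*(Real.sinh (u t / r))^2 + (-1:ℝ)*(deriv u t)^2*(Real.sinh (u t / r))^2) * hcsqv
  -- derivative of the speed
  have hWd : ∀ t, HasDerivAt (speedSG r u v)
      ((2 * deriv u t * deriv (deriv u) t
          + 2 * Real.cosh (u t / r) * Real.sinh (u t / r) * deriv u t * deriv v t ^ 2 / r
          + 2 * Real.cosh (u t / r) ^ 2 * deriv v t * deriv (deriv v) t)
        / (2 * speedSG r u v t)) t := by
    intro t
    have hQd : HasDerivAt (fun τ => deriv u τ ^ 2 + Real.cosh (u τ / r) ^ 2 * deriv v τ ^ 2)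
        (2 * deriv u t * deriv (deriv u) t
          + 2 * Real.cosh (u t / r) * Real.sinh (u t / r) * deriv u t * deriv v t ^ 2 / r
          + 2 * Real.cosh (u t / r) ^ 2 * deriv v t * deriv (deriv v) t) t :=
      (((hddu t).pow 2).add (((hcu t).pow 2).mul ((hddv t).pow 2))).congr_deriv
        (by simp only [Pi.mul_apply, Pi.pow_apply]; push_cast; field_simp; ring)
    exact hQd.sqrt (hQpos t).ne'
  -- the minimality condition is equivalent to `NE = 0`
  have hmin : ∀ t, (kappaSG r u v t
        = -(gY r u v t * deriv (gZ r u v) t - deriv (gY r u v) t * gZ r u v t)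
          / (r * gX r u v t * speed3 (gX r u v) (gY r u v) (gZ r u v) t))
      ↔ NE r u v t = 0 := by
    intro t
    have hWne : speedSG r u v t ≠ 0 := (hWpos t).ne'
    have hW2 := hWsq t
    have hrr : r * r⁻¹ = 1 := mul_inv_cancel₀ hrne
    have hWW : speedSG r u v t * (speedSG r u v t)⁻¹ = 1 := mul_inv_cancel₀ hWne
    have hcsqu : Real.cosh (u t / r) ^ 2 = Real.sinh (u t / r) ^ 2 + 1 := Real.cosh_sq _
    have hcsqv : Real.cosh (v t / r) ^ 2 = Real.sinh (v t / r) ^ 2 + 1 := Real.cosh_sq _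
    have hchne : Real.cosh (u t / r) ≠ 0 := (Real.cosh_pos _).ne'
    have hcvne : Real.cosh (v t / r) ≠ 0 := (Real.cosh_pos _).ne'
    simp only [kappaSG, kappaH2, hsp, hdX, hdY, hdZ, hgX2, hgY2, hgZ2, gX, gY, gZ]
    rw [div_eq_div_iff (mul_ne_zero hrne (pow_ne_zero _ hWne))
      (mul_ne_zero (mul_ne_zero hrne (mul_ne_zero (mul_ne_zero hrne hchne) hcvne)) hWne)]
    constructor
    · intro h
      apply mul_left_cancel₀
        (show r * r * speedSG r u v t ≠ 0 from mul_ne_zero (mul_ne_zero hrne hrne) hWne)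
      simp only [NE]
      linear_combination (-(Real.cosh (u t / r))) * h
        + ((-1:ℝ)*(deriv v t)^3*(Real.sinh (u t / r))*(Real.cosh (u t / r))^4*(Real.cosh (v t / r))^3*r^2*(speedSG r u v t) + (deriv v t)^3*(Real.sinh (u t / r))*(Real.cosh (u t / r))^4*(Real.sinh (v t / r))^2*(Real.cosh (v t / r))*r^2*(speedSG r u v t) + (-2:ℝ)*(deriv u t)^2*(deriv v t)*(Real.sinh (u t / r))*(Real.cosh (u t / r))^4*(Real.cosh (v t / r))^3*r^2*(speedSG r u v t) + (2:ℝ)*(deriv u t)^2*(deriv v t)*(Real.sinh (u t / r))*(Real.cosh (u t / r))^4*(Real.sinh (v t / r))^2*(Real.cosh (v t / r))*r^2*(speedSG r u v t) + (2:ℝ)*(deriv u t)^2*(deriv v t)*(Real.sinh (u t / r))^3*(Real.cosh (u t / r))^2*(Real.cosh (v t / r))^3*r^2*(speedSG r u v t) + (-2:ℝ)*(deriv u t)^2*(deriv v t)*(Real.sinh (u t / r))^3*(Real.cosh (u t / r))^2*(Real.sinh (v t / r))^2*(Real.cosh (v t / r))*r^2*(speedSG r u v t)) * hrr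
        + ((-1:ℝ)*(deriv v t)*(Real.sinh (u t / r))*(Real.cosh (u t / r))^2*(Real.cosh (v t / r))*r^2*(speedSG r u v t) + (deriv u t)*(Real.cosh (u t / r))^3*(Real.sinh (v t / r))*r^2*(speedSG r u v t) + (-1:ℝ)*(deriv u t)*(Real.sinh (u t / r))^2*(Real.cosh (u t / r))*(Real.sinh (v t / r))*r^2*(speedSG r u v t)) * hW2
        + ((-1:ℝ)*(deriv v t)*(deriv (deriv u) t)*(Real.cosh (u t / r))*(Real.cosh (v t / r))*r^3*(speedSG r u v t) + (deriv v t)*(deriv (deriv u) t)*(Real.cosh (u t / r))*(Real.cosh (v t / r))^3*r^3*(speedSG r u v t) + (-1:ℝ)*(deriv v t)*(deriv (deriv u) t)*(Real.cosh (u t / r))*(Real.sinh (v t / r))^2*(Real.cosh (v t / r))*r^3*(speedSG r u v t) + (deriv v t)*(deriv (deriv u) t)*(Real.cosh (u t / r))^3*(Real.cosh (v t / r))^3*r^3*(speedSG r u v t) + (-1:ℝ)*(deriv v t)*(deriv (deriv u) t)*(Real.cosh (u t / r))^3*(Real.sinh (v t / r))^2*(Real.cosh (v t / r))*r^3*(speedSG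 r u v t) + (deriv v t)^3*(Real.sinh (u t / r))*(Real.cosh (v t / r))*r^2*(speedSG r u v t) + (-1:ℝ)*(deriv v t)^3*(Real.sinh (u t / r))*(Real.cosh (v t / r))^3*r^2*(speedSG r u v t) + (deriv v t)^3*(Real.sinh (u t / r))*(Real.sinh (v t / r))^2*(Real.cosh (v t / r))*r^2*(speedSG r u v t) + (deriv v t)^3*(Real.sinh (u t / r))*(Real.cosh (u t / r))^2*(Real.cosh (v t / r))*r^2*(speedSG r u v t) + (-1:ℝ)*(deriv v t)^3*(Real.sinh (u t / r))*(Real.cosh (u t / r))^2*(Real.cosh (v t / r))^3*r^2*(speedSG r u v t) + (deriv v t)^3*(Real.sinh (u t / r))*(Real.cosh (u t / r))^2*(Real.sinh (v t / r))^2*(Real.cosh (v t / r))*r^2*(speedSG r u v t) + (deriv v t)^3*(Real.sinh (u t / r))^3*(Real.cosh (v t / r))*r^2*(speedSG r u v t) + (-1:ℝ)*(deriv v t)^3*(Real.sinh (u t / r))^3*(Real.cosh (v t / r))^3*r^2*(speedSG r u v t) + (deriv v t)^3*(Real.sinh (u t / r))^3*(Real.sinh (v t / r))^2*(Real.cosh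 (v t / r))*r^2*(speedSG r u v t) + (deriv u t)*(deriv (deriv v) t)*(Real.cosh (u t / r))*(Real.cosh (v t / r))*r^3*(speedSG r u v t) + (-1:ℝ)*(deriv u t)*(deriv (deriv v) t)*(Real.cosh (u t / r))*(Real.cosh (v t / r))^3*r^3*(speedSG r u v t) + (deriv u t)*(deriv (deriv v) t)*(Real.cosh (u t / r))*(Real.sinh (v t / r))^2*(Real.cosh (v t / r))*r^3*(speedSG r u v t) + (-1:ℝ)*(deriv u t)*(deriv (deriv v) t)*(Real.cosh (u t / r))^3*(Real.cosh (v t / r))^3*r^3*(speedSG r u v t) + (deriv u t)*(deriv (deriv v) t)*(Real.cosh (u t / r))^3*(Real.sinh (v t / r))^2*(Real.cosh (v t / r))*r^3*(speedSG r u v t) + (deriv u t)*(deriv v t)^2*(Real.cosh (u t / r))^3*(Real.sinh (v t / r))*r^2*(speedSG r u v t) + (2:ℝ)*(deriv u t)^2*(deriv v t)*(Real.sinh (u t / r))*(Real.cosh (v t / r))*r^2*(speedSG r u v t) + (-2:ℝ)*(deriv u t)^2*(deriv v t)*(Real.sinh (u t / r))*(Real.cosh (v t / r))^3*r^2*(speedSG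 r u v t) + (2:ℝ)*(deriv u t)^2*(deriv v t)*(Real.sinh (u t / r))*(Real.sinh (v t / r))^2*(Real.cosh (v t / r))*r^2*(speedSG r u v t) + (-2:ℝ)*(deriv u t)^2*(deriv v t)*(Real.sinh (u t / r))*(Real.cosh (u t / r))^2*(Real.cosh (v t / r))^3*r^2*(speedSG r u v t) + (2:ℝ)*(deriv u t)^2*(deriv v t)*(Real.sinh (u t / r))*(Real.cosh (u t / r))^2*(Real.sinh (v t / r))^2*(Real.cosh (v t / r))*r^2*(speedSG r u v t) + (deriv u t)^3*(Real.cosh (u t / r))*(Real.sinh (v t / r))*r^2*(speedSG r u v t)) * hcsqu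
        + ((deriv v t)*(deriv (deriv u) t)*(Real.cosh (u t / r))*(Real.cosh (v t / r))*r^3*(speedSG r u v t) + (deriv v t)*(deriv (deriv u) t)*(Real.sinh (u t / r))^2*(Real.cosh (u t / r))*(Real.cosh (v t / r))*r^3*(speedSG r u v t) + (-1:ℝ)*(deriv v t)^3*(Real.sinh (u t / r))*(Real.cosh (v t / r))*r^2*(speedSG r u v t) + (-2:ℝ)*(deriv v t)^3*(Real.sinh (u t / r))^3*(Real.cosh (v t / r))*r^2*(speedSG r u v t) + (-1:ℝ)*(deriv v t)^3*(Real.sinh (u t / r))^5*(Real.cosh (v t / r))*r^2*(speedSG r u v t) + (-1:ℝ)*(deriv u t)*(deriv (deriv v) t)*(Real.cosh (u t / r))*(Real.cosh (v t / r))*r^3*(speedSG r u v t) + (-1:ℝ)*(deriv u t)*(deriv (deriv v) t)*(Real.sinh (u t / r))^2*(Real.cosh (u t / r))*(Real.cosh (v t / r))*r^3*(speedSG r u v t) + (-2:ℝ)*(deriv u t)^2*(deriv v t)*(Real.sinh (u t / r))*(Real.cosh (v t / r))*r^2*(speedSG r u v t) + (-2:ℝ)*(deriv u t)^2*(deriv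 v t)*(Real.sinh (u t / r))^3*(Real.cosh (v t / r))*r^2*(speedSG r u v t)) * hcsqv
    · intro h
      apply mul_left_cancel₀ hchne
      simp only [NE] at h
      linear_combination (-(r * r * speedSG r u v t)) * h
        + ((-1:ℝ)*(deriv v t)^3*(Real.sinh (u t / r))*(Real.cosh (u t / r))^4*(Real.cosh (v t / r))^3*r^2*(speedSG r u v t) + (deriv v t)^3*(Real.sinh (u t / r))*(Real.cosh (u t / r))^4*(Real.sinh (v t / r))^2*(Real.cosh (v t / r))*r^2*(speedSG r u v t) + (-2:ℝ)*(deriv u t)^2*(deriv v t)*(Real.sinh (u t / r))*(Real.cosh (u t / r))^4*(Real.cosh (v t / r))^3*r^2*(speedSG r u v t) + (2:ℝ)*(deriv u t)^2*(deriv v t)*(Real.sinh (u t / r))*(Real.cosh (u t / r))^4*(Real.sinh (v t / r))^2*(Real.cosh (v t / r))*r^2*(speedSG r u v t) + (2:ℝ)*(deriv u t)^2*(deriv v t)*(Real.sinh (u t / r))^3*(Real.cosh (u t / r))^2*(Real.cosh (v t / r))^3*r^2*(speedSG r u v t) + (-2:ℝ)*(deriv u t)^2*(deriv v t)*(Real.sinh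 (u t / r))^3*(Real.cosh (u t / r))^2*(Real.sinh (v t / r))^2*(Real.cosh (v t / r))*r^2*(speedSG r u v t)) * hrr
        + ((-1:ℝ)*(deriv v t)*(Real.sinh (u t / r))*(Real.cosh (u t / r))^2*(Real.cosh (v t / r))*r^2*(speedSG r u v t) + (deriv u t)*(Real.cosh (u t / r))^3*(Real.sinh (v t / r))*r^2*(speedSG r u v t) + (-1:ℝ)*(deriv u t)*(Real.sinh (u t / r))^2*(Real.cosh (u t / r))*(Real.sinh (v t / r))*r^2*(speedSG r u v t)) * hW2
        + ((-1:ℝ)*(deriv v t)*(deriv (deriv u) t)*(Real.cosh (u t / r))*(Real.cosh (v t / r))*r^3*(speedSG r u v t) + (deriv v t)*(deriv (deriv u) t)*(Real.cosh (u t / r))*(Real.cosh (v t / r))^3*r^3*(speedSG r u v t) + (-1:ℝ)*(deriv v t)*(deriv (deriv u) t)*(Real.cosh (u t / r))*(Real.sinh (v t / r))^2*(Real.cosh (v t / r))*r^3*(speedSG r u v t) + (deriv v t)*(deriv (deriv u) t)*(Real.cosh (u t / r))^3*(Real.cosh (v t / r))^3*r^3*(speedSG r u v t) + (-1:ℝ)*(deriv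 v t)*(deriv (deriv u) t)*(Real.cosh (u t / r))^3*(Real.sinh (v t / r))^2*(Real.cosh (v t / r))*r^3*(speedSG r u v t) + (deriv v t)^3*(Real.sinh (u t / r))*(Real.cosh (v t / r))*r^2*(speedSG r u v t) + (-1:ℝ)*(deriv v t)^3*(Real.sinh (u t / r))*(Real.cosh (v t / r))^3*r^2*(speedSG r u v t) + (deriv v t)^3*(Real.sinh (u t / r))*(Real.sinh (v t / r))^2*(Real.cosh (v t / r))*r^2*(speedSG r u v t) + (deriv v t)^3*(Real.sinh (u t / r))*(Real.cosh (u t / r))^2*(Real.cosh (v t / r))*r^2*(speedSG r u v t) + (-1:ℝ)*(deriv v t)^3*(Real.sinh (u t / r))*(Real.cosh (u t / r))^2*(Real.cosh (v t / r))^3*r^2*(speedSG r u v t) + (deriv v t)^3*(Real.sinh (u t / r))*(Real.cosh (u t / r))^2*(Real.sinh (v t / r))^2*(Real.cosh (v t / r))*r^2*(speedSG r u v t) + (deriv v t)^3*(Real.sinh (u t / r))^3*(Real.cosh (v t / r))*r^2*(speedSG r u v t) + (-1:ℝ)*(deriv v t)^3*(Real.sinh (u t / r))^3*(Real.cosh (v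 t / r))^3*r^2*(speedSG r u v t) + (deriv v t)^3*(Real.sinh (u t / r))^3*(Real.sinh (v t / r))^2*(Real.cosh (v t / r))*r^2*(speedSG r u v t) + (deriv u t)*(deriv (deriv v) t)*(Real.cosh (u t / r))*(Real.cosh (v t / r))*r^3*(speedSG r u v t) + (-1:ℝ)*(deriv u t)*(deriv (deriv v) t)*(Real.cosh (u t / r))*(Real.cosh (v t / r))^3*r^3*(speedSG r u v t) + (deriv u t)*(deriv (deriv v) t)*(Real.cosh (u t / r))*(Real.sinh (v t / r))^2*(Real.cosh (v t / r))*r^3*(speedSG r u v t) + (-1:ℝ)*(deriv u t)*(deriv (deriv v) t)*(Real.cosh (u t / r))^3*(Real.cosh (v t / r))^3*r^3*(speedSG r u v t) + (deriv u t)*(deriv (deriv v) t)*(Real.cosh (u t / r))^3*(Real.sinh (v t / r))^2*(Real.cosh (v t / r))*r^3*(speedSG r u v t) + (deriv u t)*(deriv v t)^2*(Real.cosh (u t / r))^3*(Real.sinh (v t / r))*r^2*(speedSG r u v t) + (2:ℝ)*(deriv u t)^2*(deriv v t)*(Real.sinh (u t / r))*(Real.cosh (v t / r))*r^2*(speedSG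 r u v t) + (-2:ℝ)*(deriv u t)^2*(deriv v t)*(Real.sinh (u t / r))*(Real.cosh (v t / r))^3*r^2*(speedSG r u v t) + (2:ℝ)*(deriv u t)^2*(deriv v t)*(Real.sinh (u t / r))*(Real.sinh (v t / r))^2*(Real.cosh (v t / r))*r^2*(speedSG r u v t) + (-2:ℝ)*(deriv u t)^2*(deriv v t)*(Real.sinh (u t / r))*(Real.cosh (u t / r))^2*(Real.cosh (v t / r))^3*r^2*(speedSG r u v t) + (2:ℝ)*(deriv u t)^2*(deriv v t)*(Real.sinh (u t / r))*(Real.cosh (u t / r))^2*(Real.sinh (v t / r))^2*(Real.cosh (v t / r))*r^2*(speedSG r u v t) + (deriv u t)^3*(Real.cosh (u t / r))*(Real.sinh (v t / r))*r^2*(speedSG r u v t)) * hcsqu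
        + ((deriv v t)*(deriv (deriv u) t)*(Real.cosh (u t / r))*(Real.cosh (v t / r))*r^3*(speedSG r u v t) + (deriv v t)*(deriv (deriv u) t)*(Real.sinh (u t / r))^2*(Real.cosh (u t / r))*(Real.cosh (v t / r))*r^3*(speedSG r u v t) + (-1:ℝ)*(deriv v t)^3*(Real.sinh (u t / r))*(Real.cosh (v t / r))*r^2*(speedSG r u v t) + (-2:ℝ)*(deriv v t)^3*(Real.sinh (u t / r))^3*(Real.cosh (v t / r))*r^2*(speedSG r u v t) + (-1:ℝ)*(deriv v t)^3*(Real.sinh (u t / r))^5*(Real.cosh (v t / r))*r^2*(speedSG r u v t) + (-1:ℝ)*(deriv u t)*(deriv (deriv v) t)*(Real.cosh (u t / r))*(Real.cosh (v t / r))*r^3*(speedSG r u v t) + (-1:ℝ)*(deriv u t)*(deriv (deriv v) t)*(Real.sinh (u t / r))^2*(Real.cosh (u t / r))*(Real.cosh (v t / r))*r^3*(speedSG r u v t) + (-2:ℝ)*(deriv u t)^2*(deriv v t)*(Real.sinh (u t / r))*(Real.cosh (v t / r))*r^2*(speedSG r u v t) + (-2:ℝ)*(deriv u t)^2*(deriv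 v t)*(Real.sinh (u t / r))^3*(Real.cosh (v t / r))*r^2*(speedSG r u v t)) * hcsqv
  -- first Euler–Lagrange equation
  have hE1 : ∀ t, (deriv (fun a => Real.cosh (a / r) * Real.cosh (v t / r)) (u t)
          * speedSG r u v t
        + Real.cosh (u t / r) * Real.cosh (v t / r) * Real.sinh (u t / r)
          * Real.cosh (u t / r) * deriv v t ^ 2 / (r * speedSG r u v t)
      = deriv (fun s => Real.cosh (u s / r) * Real.cosh (v s / r) * deriv u s
          / speedSG r u v s) t)
      ↔ deriv v t * NE r u v t = 0 := by
    intro t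
    have hWne : speedSG r u v t ≠ 0 := (hWpos t).ne'
    have hW2 := hWsq t
    have hrr : r * r⁻¹ = 1 := mul_inv_cancel₀ hrne
    have hWW : speedSG r u v t * (speedSG r u v t)⁻¹ = 1 := mul_inv_cancel₀ hWne
    have hcsqu : Real.cosh (u t / r) ^ 2 = Real.sinh (u t / r) ^ 2 + 1 := Real.cosh_sq _
    have hcsqv : Real.cosh (v t / r) ^ 2 = Real.sinh (v t / r) ^ 2 + 1 := Real.cosh_sq _
    have hL1 : deriv (fun a => Real.cosh (a / r) * Real.cosh (v t / r)) (u t)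
        = Real.sinh (u t / r) * Real.cosh (v t / r) / r :=
      (((((hasDerivAt_id (u t)).div_const r).cosh).mul_const
        (Real.cosh (v t / r))).congr_deriv (by simp only [id_eq]; ring)).deriv
    have hD1 : HasDerivAt (fun τ => Real.cosh (u τ / r) * Real.cosh (v τ / r) * deriv u τ
        / speedSG r u v τ)
        ((r * ((Real.sinh (u t / r) * (deriv u t / r) * Real.cosh (v t / r)
              + Real.cosh (u t / r) * (Real.sinh (v t / r) * (deriv v t / r))) * deriv u t
            + Real.cosh (u t / r) * Real.cosh (v t / r) * deriv (deriv u) t)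
            * speedSG r u v t ^ 2
          - r * (Real.cosh (u t / r) * Real.cosh (v t / r)) * deriv u t
            * (2 * deriv u t * deriv (deriv u) t
              + 2 * Real.cosh (u t / r) * Real.sinh (u t / r) * deriv u t * deriv v t ^ 2 / r
              + 2 * Real.cosh (u t / r) ^ 2 * deriv v t * deriv (deriv v) t) / 2)
          / (r * speedSG r u v t ^ 3)) t :=
      ((((hcu t).mul (hcv t)).mul (hddu t)).div (hWd t) hWne).congr_deriv
        (by simp only [Pi.mul_apply, Pi.pow_apply]; field_simp)
    rw [hL1, hD1.deriv, eq_div_iff (mul_ne_zero hrne (pow_ne_zero _ hWne))]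
    constructor
    · intro h
      simp only [NE]
      linear_combination h
        + ((-1:ℝ)*(deriv v t)^2*(Real.sinh (u t / r))*(Real.cosh (u t / r))^2*(Real.cosh (v t / r))*r*r⁻¹*(speedSG r u v t)^2) * hWW
        + ((-1:ℝ)*(Real.sinh (u t / r))*(Real.cosh (v t / r))*(speedSG r u v t)^4 + (-1:ℝ)*(deriv v t)^2*(Real.sinh (u t / r))*(Real.cosh (u t / r))^2*(Real.cosh (v t / r))*(speedSG r u v t)^2 + (deriv u t)*(deriv v t)*(Real.cosh (u t / r))*(Real.sinh (v t / r))*(speedSG r u v t)^2 + (deriv u t)^2*(Real.sinh (u t / r))*(Real.cosh (v t / r))*(speedSG r u v t)^2 + (-1:ℝ)*(deriv u t)^2*(deriv v t)^2*(Real.sinh (u t / r))*(Real.cosh (u t / r))^2*(Real.cosh (v t / r))) * hrr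
        + ((-1:ℝ)*(Real.sinh (u t / r))*(Real.cosh (v t / r))*(speedSG r u v t)^2 + (deriv (deriv u) t)*(Real.cosh (u t / r))*(Real.cosh (v t / r))*r + (-2:ℝ)*(deriv v t)^2*(Real.sinh (u t / r))*(Real.cosh (u t / r))^2*(Real.cosh (v t / r)) + (deriv u t)*(deriv v t)*(Real.cosh (u t / r))*(Real.sinh (v t / r))) * hW2
    · intro h
      simp only [NE] at h
      linear_combination h
        - (((-1:ℝ)*(deriv v t)^2*(Real.sinh (u t / r))*(Real.cosh (u t / r))^2*(Real.cosh (v t / r))*r*r⁻¹*(speedSG r u v t)^2) * hWW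
        + ((-1:ℝ)*(Real.sinh (u t / r))*(Real.cosh (v t / r))*(speedSG r u v t)^4 + (-1:ℝ)*(deriv v t)^2*(Real.sinh (u t / r))*(Real.cosh (u t / r))^2*(Real.cosh (v t / r))*(speedSG r u v t)^2 + (deriv u t)*(deriv v t)*(Real.cosh (u t / r))*(Real.sinh (v t / r))*(speedSG r u v t)^2 + (deriv u t)^2*(Real.sinh (u t / r))*(Real.cosh (v t / r))*(speedSG r u v t)^2 + (-1:ℝ)*(deriv u t)^2*(deriv v t)^2*(Real.sinh (u t / r))*(Real.cosh (u t / r))^2*(Real.cosh (v t / r))) * hrr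
        + ((-1:ℝ)*(Real.sinh (u t / r))*(Real.cosh (v t / r))*(speedSG r u v t)^2 + (deriv (deriv u) t)*(Real.cosh (u t / r))*(Real.cosh (v t / r))*r + (-2:ℝ)*(deriv v t)^2*(Real.sinh (u t / r))*(Real.cosh (u t / r))^2*(Real.cosh (v t / r)) + (deriv u t)*(deriv v t)*(Real.cosh (u t / r))*(Real.sinh (v t / r))) * hW2)
  -- second Euler–Lagrange equation
  have hE2 : ∀ t, (deriv (fun b => Real.cosh (u t / r) * Real.cosh (b / r)) (v t)
          * speedSG r u v t
      = deriv (fun s => Real.cosh (u s / r) * Real.cosh (v s / r) * deriv v s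
          * Real.cosh (u s / r) ^ 2 / speedSG r u v s) t)
      ↔ deriv u t * NE r u v t = 0 := by
    intro t
    have hWne : speedSG r u v t ≠ 0 := (hWpos t).ne'
    have hW2 := hWsq t
    have hrr : r * r⁻¹ = 1 := mul_inv_cancel₀ hrne
    have hWW : speedSG r u v t * (speedSG r u v t)⁻¹ = 1 := mul_inv_cancel₀ hWne
    have hcsqu : Real.cosh (u t / r) ^ 2 = Real.sinh (u t / r) ^ 2 + 1 := Real.cosh_sq _
    have hcsqv : Real.cosh (v t / r) ^ 2 = Real.sinh (v t / r) ^ 2 + 1 := Real.cosh_sq _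
    have hL2 : deriv (fun b => Real.cosh (u t / r) * Real.cosh (b / r)) (v t)
        = Real.cosh (u t / r) * Real.sinh (v t / r) / r :=
      (((((hasDerivAt_id (v t)).div_const r).cosh).const_mul
        (Real.cosh (u t / r))).congr_deriv (by simp only [id_eq]; ring)).deriv
    have hD2 : HasDerivAt (fun τ => Real.cosh (u τ / r) * Real.cosh (v τ / r) * deriv v τ
        * Real.cosh (u τ / r) ^ 2 / speedSG r u v τ)
        ((r * (((Real.sinh (u t / r) * (deriv u t / r) * Real.cosh (v t / r)
                + Real.cosh (u t / r) * (Real.sinh (v t / r) * (deriv v t / r))) * deriv v t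
              + Real.cosh (u t / r) * Real.cosh (v t / r) * deriv (deriv v) t)
              * Real.cosh (u t / r) ^ 2
            + Real.cosh (u t / r) * Real.cosh (v t / r) * deriv v t
              * (2 * Real.cosh (u t / r) * (Real.sinh (u t / r) * (deriv u t / r))))
            * speedSG r u v t ^ 2
          - r * (Real.cosh (u t / r) * Real.cosh (v t / r) * deriv v t
              * Real.cosh (u t / r) ^ 2)
            * (2 * deriv u t * deriv (deriv u) t
              + 2 * Real.cosh (u t / r) * Real.sinh (u t / r) * deriv u t * deriv v t ^ 2 / r
              + 2 * Real.cosh (u t / r) ^ 2 * deriv v t * deriv (deriv v) t) / 2)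
          / (r * speedSG r u v t ^ 3)) t :=
      (((((hcu t).mul (hcv t)).mul (hddv t)).mul ((hcu t).pow 2)).div (hWd t) hWne).congr_deriv
        (by simp only [Pi.mul_apply, Pi.pow_apply]; push_cast; field_simp)
    rw [hL2, hD2.deriv, eq_div_iff (mul_ne_zero hrne (pow_ne_zero _ hWne))]
    constructor
    · intro h
      simp only [NE]
      linear_combination -h
        + ((Real.cosh (u t / r))*(Real.sinh (v t / r))*(speedSG r u v t)^4 + (-1:ℝ)*(deriv v t)^2*(Real.cosh (u t / r))^3*(Real.sinh (v t / r))*(speedSG r u v t)^2 + (-3:ℝ)*(deriv u t)*(deriv v t)*(Real.sinh (u t / r))*(Real.cosh (u t / r))^2*(Real.cosh (v t / r))*(speedSG r u v t)^2 + (deriv u t)*(deriv v t)^3*(Real.sinh (u t / r))*(Real.cosh (u t / r))^4*(Real.cosh (v t / r))) * hrr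
        + ((Real.cosh (u t / r))*(Real.sinh (v t / r))*(speedSG r u v t)^2 + (-1:ℝ)*(deriv (deriv v) t)*(Real.cosh (u t / r))^3*(Real.cosh (v t / r))*r + (-3:ℝ)*(deriv u t)*(deriv v t)*(Real.sinh (u t / r))*(Real.cosh (u t / r))^2*(Real.cosh (v t / r)) + (deriv u t)^2*(Real.cosh (u t / r))*(Real.sinh (v t / r))) * hW2
    · intro h
      simp only [NE] at h
      linear_combination -h
        + ((Real.cosh (u t / r))*(Real.sinh (v t / r))*(speedSG r u v t)^4 + (-1:ℝ)*(deriv v t)^2*(Real.cosh (u t / r))^3*(Real.sinh (v t / r))*(speedSG r u v t)^2 + (-3:ℝ)*(deriv u t)*(deriv v t)*(Real.sinh (u t / r))*(Real.cosh (u t / r))^2*(Real.cosh (v t / r))*(speedSG r u v t)^2 + (deriv u t)*(deriv v t)^3*(Real.sinh (u t / r))*(Real.cosh (u t / r))^4*(Real.cosh (v t / r))) * hrr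
        + ((Real.cosh (u t / r))*(Real.sinh (v t / r))*(speedSG r u v t)^2 + (-1:ℝ)*(deriv (deriv v) t)*(Real.cosh (u t / r))^3*(Real.cosh (v t / r))*r + (-3:ℝ)*(deriv u t)*(deriv v t)*(Real.sinh (u t / r))*(Real.cosh (u t / r))^2*(Real.cosh (v t / r)) + (deriv u t)^2*(Real.cosh (u t / r))*(Real.sinh (v t / r))) * hW2
  -- assemble
  constructor
  · intro h t
    have hN : NE r u v t = 0 := (hmin t).mp (h t)
    exact ⟨(hE1 t).mpr (by rw [hN, mul_zero]), (hE2 t).mpr (by rw [hN, mul_zero])⟩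
  · intro h t
    have h1 := (hE1 t).mp (h t).1
    have h2 := (hE2 t).mp (h t).2
    apply (hmin t).mpr
    rcases mul_eq_zero.mp h1 with hb | hN
    · rcases mul_eq_zero.mp h2 with ha | hN
      · exact absurd (by rw [ha, hb]) (hreg t)
      · exact hN
    · exact hN
end
end

section
/- Let r > 0 and let u, v : ℝ → ℝ be twice differentiable with u(t) > 0 and (u̇(t), v̇(t)) ≠ (0,0) for all t, and suppose γ(t) = ψ(u(t), v(t)) is an extrinsic catenary of elliptic type, i.e., (u,v) satisfies the Euler–Lagrange equations of ∫ f(u,v)‖γ̇‖ dt with f(u,v) = sinh(u/r). Then the Clairaut-type quantity (1/2)·sinh(2u/r)·cos ϑ is constant in t, where cos ϑ = cosh(u/r) v̇ / ‖γ̇‖ is the cosine of the angle between γ̇ and the v-coordinate curves of ψ; equivalently, t ↦ sinh(u/r)cosh²(u/r) v̇ / √(u̇² + cosh²(u/r) v̇²) is a constant function. -/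
noncomputable section
open Real

/-- Clairaut-type conservation law for extrinsic catenaries of
elliptic type: `sinh(u/r) cosh²(u/r) v̇ / ‖γ̇‖` is constant. -/
theorem clairaut_elliptic_catenary (r : ℝ) (hr : 0 < r) (u v : ℝ → ℝ)
    (hupos : ∀ t : ℝ, 0 < u t)
    (hu : Differentiable ℝ u) (hu2 : Differentiable ℝ (deriv u))
    (hv : Differentiable ℝ v) (hv2 : Differentiable ℝ (deriv v))
    (hreg : ∀ t : ℝ, (deriv u t, deriv v t) ≠ (0, 0))
    (hEL : EulerLagrange r (fun a _ => Real.sinh (a / r)) u v) :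
    ∃ c : ℝ, ∀ t : ℝ,
      Real.sinh (u t / r) * (Real.cosh (u t / r)) ^ 2 * deriv v t / speedSG r u v t
        = c := by
  set G : ℝ → ℝ := fun s =>
    Real.sinh (u s / r) * deriv v s * (Real.cosh (u s / r)) ^ 2 / speedSG r u v s with hG
  have hpos : ∀ t, 0 < (deriv u t) ^ 2 + (Real.cosh (u t / r)) ^ 2 * (deriv v t) ^ 2 := by
    intro t
    rcases eq_or_ne (deriv u t) 0 with h | h
    · have hvne : deriv v t ≠ 0 := by
        intro hv0; exact hreg t (by simp [h, hv0])
      have : 0 < (Real.cosh (u t / r)) ^ 2 * (deriv v t) ^ 2 :=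
        mul_pos (pow_pos (Real.cosh_pos _) 2) (by positivity)
      nlinarith [sq_nonneg (deriv u t)]
    · nlinarith [sq_nonneg (Real.cosh (u t / r) * deriv v t), pow_pos (abs_pos.mpr h) 2, sq_abs (deriv u t)]
  have hspos : ∀ t, 0 < speedSG r u v t := fun t => Real.sqrt_pos.mpr (hpos t)
  have hsd : Differentiable ℝ (speedSG r u v) := by
    intro t
    have hin : DifferentiableAt ℝ
        (fun s => (deriv u s) ^ 2 + (Real.cosh (u s / r)) ^ 2 * (deriv v s) ^ 2) t := by
      apply DifferentiableAt.add
      · exact (hu2 t).pow 2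
      · exact (((((hu t).div_const r).cosh).pow 2).mul ((hv2 t).pow 2))
    exact hin.sqrt (ne_of_gt (hpos t))
  have hGd : Differentiable ℝ G := by
    intro t
    apply DifferentiableAt.div
    · exact ((((hu t).div_const r).sinh.mul (hv2 t)).mul (((hu t).div_const r).cosh.pow 2))
    · exact hsd t
    · exact ne_of_gt (hspos t)
  have hderiv0 : ∀ t, deriv G t = 0 := by
    intro t
    have h2 := (hEL t).2
    simp only [deriv_const] at h2
    rw [hG]
    simpa using h2.symm
  refine ⟨G 0, fun t => ?_⟩
  have hconst : G t = G 0 := is_const_of_deriv_eq_zero hGd hderiv0 t 0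
  rw [← hconst, hG]
  ring
end
end
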